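/- arXiv:1704.02267 — 5 statements merged into one kernel-verified Lean document; each statement's English description precedes it below -/
import Mathlib

section
/- Assume the TBT matrix T is invertible. Then Γ̂_1^τ = U·Γ_1·U_{2m}J_{2m} + [0 M_{31}] and Γ̂_2^τ = U·Γ_2·U_{2n}J_{2n} + [0 M_{32}], where ^τ denotes the transpose (without conjugation) and [0 M_{3p}] has its left block equal to zero (of size mn×m for p=1 and mn×n for p=2). -/
open Matrix

noncomputable section

/-- The scalar sequence `a_r`: `0` for `r < 0`, `i/2` for `r = 0`, `i` for `r > 0`. -/
def aC (r : ℤ) : ℂ := if r < 0 then 0 else if r = 0 then Complex.I / 2 else Complex.I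

/-- `A_1`: block matrix `{𝒜_{1,p−q}}` with blocks `0`, `(i/2)I_m`, `i·I_m`. -/
def A1 (m n : ℕ) : Matrix (Fin n × Fin m) (Fin n × Fin m) ℂ :=
  Matrix.of fun r c => if r.2 = c.2 then aC (((r.1 : ℕ) : ℤ) - ((c.1 : ℕ) : ℤ)) else 0

/-- `A_2 = diag{𝒜_{2,0}, …, 𝒜_{2,0}}`. -/
def A2 (m n : ℕ) : Matrix (Fin n × Fin m) (Fin n × Fin m) ℂ :=
  Matrix.of fun r c => if r.1 = c.1 then aC (((r.2 : ℕ) : ℤ) - ((c.2 : ℕ) : ℤ)) else 0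

/-- `𝒜_1 = {a_{j−ℓ}}_{j,ℓ=1}^n`. -/
def calA1 (n : ℕ) : Matrix (Fin n) (Fin n) ℂ :=
  Matrix.of fun p q => aC (((p : ℕ) : ℤ) - ((q : ℕ) : ℤ))

/-- `𝒜_2 = {a_{j−ℓ}}_{j,ℓ=1}^m`. -/
def calA2 (m : ℕ) : Matrix (Fin m) (Fin m) ℂ :=
  Matrix.of fun j l => aC (((j : ℕ) : ℤ) - ((l : ℕ) : ℤ))

/-- The Toeplitz-block Toeplitz matrix `T`, entry `t_{p−q}^{(j−ℓ)}`. -/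
def TBT (m n : ℕ) (t : ℤ → ℤ → ℂ) : Matrix (Fin n × Fin m) (Fin n × Fin m) ℂ :=
  Matrix.of fun r c =>
    t (((r.1 : ℕ) : ℤ) - ((c.1 : ℕ) : ℤ)) (((r.2 : ℕ) : ℤ) - ((c.2 : ℕ) : ℤ))

/-- `M_{11}`: block column, `p`-th block `(1/2)𝒯_0 + Σ_{s=1}^{p−1} 𝒯_s`. -/
def M11 (m n : ℕ) (t : ℤ → ℤ → ℂ) : Matrix (Fin n × Fin m) (Fin m) ℂ :=
  Matrix.of fun r l => (1 / 2 : ℂ) * t 0 (((r.2 : ℕ) : ℤ) - ((l : ℕ) : ℤ))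
    + ∑ s ∈ Finset.range (r.1 : ℕ), t ((s : ℤ) + 1) (((r.2 : ℕ) : ℤ) - ((l : ℕ) : ℤ))

/-- `M_{21} = [I_m I_m … I_m]`. -/
def M21 (m n : ℕ) : Matrix (Fin m) (Fin n × Fin m) ℂ :=
  Matrix.of fun j c => if j = c.2 then 1 else 0

/-- `M_{31} = M_{21}^*`. -/
def M31 (m n : ℕ) : Matrix (Fin n × Fin m) (Fin m) ℂ := (M21 m n)ᴴ

/-- `M_{41}`: block row, `q`-th block `(1/2)𝒯_0 + Σ_{s=1}^{q−1} 𝒯_{−s}`. -/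
def M41 (m n : ℕ) (t : ℤ → ℤ → ℂ) : Matrix (Fin m) (Fin n × Fin m) ℂ :=
  Matrix.of fun j c => (1 / 2 : ℂ) * t 0 (((j : ℕ) : ℤ) - ((c.2 : ℕ) : ℤ))
    + ∑ s ∈ Finset.range (c.1 : ℕ), t (-((s : ℤ) + 1)) (((j : ℕ) : ℤ) - ((c.2 : ℕ) : ℤ))

/-- `j`-th entry of the column `ℳ_{12}^{(r)}`. -/
def m12e (m : ℕ) (t : ℤ → ℤ → ℂ) (r : ℤ) (j : Fin m) : ℂ :=
  (1 / 2 : ℂ) * t r 0 + ∑ s ∈ Finset.range (j : ℕ), t r ((s : ℤ) + 1)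

/-- `ℓ`-th entry of the row `ℳ_{42}^{(r)}`. -/
def m42e (m : ℕ) (t : ℤ → ℤ → ℂ) (r : ℤ) (l : Fin m) : ℂ :=
  (1 / 2 : ℂ) * t r 0 + ∑ s ∈ Finset.range (l : ℕ), t r (-((s : ℤ) + 1))

/-- `M_{12} = {ℳ_{12}^{(p−q)}}`. -/
def M12 (m n : ℕ) (t : ℤ → ℤ → ℂ) : Matrix (Fin n × Fin m) (Fin n) ℂ :=
  Matrix.of fun r q => m12e m t (((r.1 : ℕ) : ℤ) - ((q : ℕ) : ℤ)) r.2

/-- `M_{22}`. -/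
def M22 (m n : ℕ) : Matrix (Fin n) (Fin n × Fin m) ℂ :=
  Matrix.of fun p c => if p = c.1 then 1 else 0

/-- `M_{32} = M_{22}^*`. -/
def M32 (m n : ℕ) : Matrix (Fin n × Fin m) (Fin n) ℂ := (M22 m n)ᴴ

/-- `M_{42} = {ℳ_{42}^{(p−q)}}`. -/
def M42 (m n : ℕ) (t : ℤ → ℤ → ℂ) : Matrix (Fin n) (Fin n × Fin m) ℂ :=
  Matrix.of fun p c => m42e m t (((p : ℕ) : ℤ) - ((c.1 : ℕ) : ℤ)) c.2

/-- `K`: the `1×mn` row, `q`-th block `(1/2)ℳ_{42}^{(0)} + Σ_{s=1}^{q−1} ℳ_{42}^{(−s)}`. -/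
def Krow (m n : ℕ) (t : ℤ → ℤ → ℂ) : (Fin n × Fin m) → ℂ :=
  fun c => (1 / 2 : ℂ) * m42e m t 0 c.2
    + ∑ s ∈ Finset.range (c.1 : ℕ), m42e m t (-((s : ℤ) + 1)) c.2

/-- `K_{11}`: `p`-th row `(1/2)ℳ_{42}^{(0)} + Σ_{s=1}^{p−1} ℳ_{42}^{(s)}`. -/
def K11 (m n : ℕ) (t : ℤ → ℤ → ℂ) : Matrix (Fin n) (Fin m) ℂ :=
  Matrix.of fun p l => (1 / 2 : ℂ) * m42e m t 0 l
    + ∑ s ∈ Finset.range (p : ℕ), m42e m t ((s : ℤ) + 1) l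

/-- `K_{12}`: `q`-th column `(1/2)ℳ_{12}^{(0)} + Σ_{s=1}^{q−1} ℳ_{12}^{(−s)}`. -/
def K12 (m n : ℕ) (t : ℤ → ℤ → ℂ) : Matrix (Fin m) (Fin n) ℂ :=
  Matrix.of fun j q => (1 / 2 : ℂ) * m12e m t 0 j
    + ∑ s ∈ Finset.range (q : ℕ), m12e m t (-((s : ℤ) + 1)) j

/-- `Π_1 = [M_{11} M_{31}]`. -/
def Pi1 (m n : ℕ) (t : ℤ → ℤ → ℂ) : Matrix (Fin n × Fin m) (Fin m ⊕ Fin m) ℂ :=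
  fromCols (M11 m n t) (M31 m n)

/-- `Π_2 = [M_{12} M_{32}]`. -/
def Pi2 (m n : ℕ) (t : ℤ → ℤ → ℂ) : Matrix (Fin n × Fin m) (Fin n ⊕ Fin n) ℂ :=
  fromCols (M12 m n t) (M32 m n)

/-- `Π̂_1 = col[M_{21}; M_{41}]`. -/
def PiHat1 (m n : ℕ) (t : ℤ → ℤ → ℂ) : Matrix (Fin m ⊕ Fin m) (Fin n × Fin m) ℂ :=
  fromRows (M21 m n) (M41 m n t)

/-- `Π̂_2 = col[M_{22}; M_{42}]`. -/
def PiHat2 (m n : ℕ) (t : ℤ → ℤ → ℂ) : Matrix (Fin n ⊕ Fin n) (Fin n × Fin m) ℂ :=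
  fromRows (M22 m n) (M42 m n t)

/-- All-ones vector. -/
def onesV (k : Type*) : k → ℂ := fun _ => 1

/-- `g_{12} = i·Π̂_1 T^{-1} Π_2 − i·[[𝟏_m 𝟏_n^*, 0],[K_{12}, 0]]`. -/
def g12M (m n : ℕ) (t : ℤ → ℤ → ℂ) : Matrix (Fin m ⊕ Fin m) (Fin n ⊕ Fin n) ℂ :=
  Complex.I • (PiHat1 m n t * (TBT m n t)⁻¹ * Pi2 m n t)
    - Complex.I • fromBlocks (vecMulVec (onesV (Fin m)) (onesV (Fin n))) 0 (K12 m n t) 0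

/-- `g_{21} = i·Π̂_2 T^{-1} Π_1 − i·[[𝟏_n 𝟏_m^*, 0],[K_{11}, 0]]`. -/
def g21M (m n : ℕ) (t : ℤ → ℤ → ℂ) : Matrix (Fin n ⊕ Fin n) (Fin m ⊕ Fin m) ℂ :=
  Complex.I • (PiHat2 m n t * (TBT m n t)⁻¹ * Pi1 m n t)
    - Complex.I • fromBlocks (vecMulVec (onesV (Fin n)) (onesV (Fin m))) 0 (K11 m n t) 0

/-- The `k×k` flip (anti-diagonal) matrix. -/
def flipU (k : ℕ) : Matrix (Fin k) (Fin k) ℂ :=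
  Matrix.of fun p q => if (p : ℕ) + (q : ℕ) + 1 = k then 1 else 0

/-- `U_{2k}`, the `2k×2k` flip matrix on the sum type. -/
def U2 (k : ℕ) : Matrix (Fin k ⊕ Fin k) (Fin k ⊕ Fin k) ℂ :=
  fromBlocks 0 (flipU k) (flipU k) 0

/-- `J_{2k} = diag{I_k, −I_k}`. -/
def J2 (k : ℕ) : Matrix (Fin k ⊕ Fin k) (Fin k ⊕ Fin k) ℂ :=
  fromBlocks 1 0 0 (-1)

/-- `U = U_{mn}`, the `mn×mn` flip matrix (global index `m·p + j`). -/
def UmnM (m n : ℕ) : Matrix (Fin n × Fin m) (Fin n × Fin m) ℂ :=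
  Matrix.of fun r c =>
    if m * (r.1 : ℕ) + (r.2 : ℕ) + (m * (c.1 : ℕ) + (c.2 : ℕ)) + 1 = m * n then 1 else 0

/-- `ψ(λ) = (λ + i/2)/(λ − i/2)`. -/
def psiM (l : ℂ) : ℂ := (l + Complex.I / 2) / (l - Complex.I / 2)

/-- `h(y_1, y_2)`, entry `y_1^{p−1} y_2^{j−1}`. -/
def hVec (m n : ℕ) (y1 y2 : ℂ) : (Fin n × Fin m) → ℂ :=
  fun r => y1 ^ (r.1 : ℕ) * y2 ^ (r.2 : ℕ)

/-- `ω(λ,μ) = 𝟏^*(A_1^*−μ_1)^{-1}(A_2^*−μ_2)^{-1}T^{-1}(A_2−λ_2)^{-1}(A_1−λ_1)^{-1}𝟏`. -/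
def omegaF (m n : ℕ) (t : ℤ → ℤ → ℂ) (l1 l2 u1 u2 : ℂ) : ℂ :=
  star (onesV (Fin n × Fin m)) ⬝ᵥ
    ((((A1 m n)ᴴ - u1 • 1)⁻¹ * ((A2 m n)ᴴ - u2 • 1)⁻¹ * (TBT m n t)⁻¹ *
      (A2 m n - l2 • 1)⁻¹ * (A1 m n - l1 • 1)⁻¹) *ᵥ onesV (Fin n × Fin m))

/-- `ρ(y,z) = h(conj z_1, conj z_2)^* T^{-1} h(y_1,y_2)`. -/
def rhoF (m n : ℕ) (t : ℤ → ℤ → ℂ) (y1 y2 z1 z2 : ℂ) : ℂ :=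
  star (hVec m n ((starRingEnd ℂ) z1) ((starRingEnd ℂ) z2)) ⬝ᵥ
    ((TBT m n t)⁻¹ *ᵥ hVec m n y1 y2)

/-- `Γ_1 = T^{-1}Π_1`. -/
def Gam1 (m n : ℕ) (t : ℤ → ℤ → ℂ) : Matrix (Fin n × Fin m) (Fin m ⊕ Fin m) ℂ :=
  (TBT m n t)⁻¹ * Pi1 m n t

/-- `Γ_2 = T^{-1}Π_2`. -/
def Gam2 (m n : ℕ) (t : ℤ → ℤ → ℂ) : Matrix (Fin n × Fin m) (Fin n ⊕ Fin n) ℂ :=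
  (TBT m n t)⁻¹ * Pi2 m n t

/-- `Γ̂_1 = Π̂_1 T^{-1}`. -/
def GamHat1 (m n : ℕ) (t : ℤ → ℤ → ℂ) : Matrix (Fin m ⊕ Fin m) (Fin n × Fin m) ℂ :=
  PiHat1 m n t * (TBT m n t)⁻¹

/-- `Γ̂_2 = Π̂_2 T^{-1}`. -/
def GamHat2 (m n : ℕ) (t : ℤ → ℤ → ℂ) : Matrix (Fin n ⊕ Fin n) (Fin n × Fin m) ℂ :=
  PiHat2 m n t * (TBT m n t)⁻¹

/-- `Γ = [Γ_1 Γ_2]`. -/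
def GammaFull (m n : ℕ) (t : ℤ → ℤ → ℂ) :
    Matrix (Fin n × Fin m) ((Fin m ⊕ Fin m) ⊕ (Fin n ⊕ Fin n)) ℂ :=
  fromCols (Gam1 m n t) (Gam2 m n t)

/-- `Γ̂ = col[Γ̂_1; Γ̂_2]`. -/
def GammaHatFull (m n : ℕ) (t : ℤ → ℤ → ℂ) :
    Matrix ((Fin m ⊕ Fin m) ⊕ (Fin n ⊕ Fin n)) (Fin n × Fin m) ℂ :=
  fromRows (GamHat1 m n t) (GamHat2 m n t)

/-- The row vector `u(μ)`. -/
def uRow (m n : ℕ) (t : ℤ → ℤ → ℂ) (u1 u2 : ℂ) :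
    ((Fin m ⊕ Fin m) ⊕ (Fin n ⊕ Fin n)) → ℂ :=
  star (onesV (Fin n × Fin m)) ᵥ*
      (((A1 m n)ᴴ - u1 • 1)⁻¹ * ((A2 m n)ᴴ - u2 • 1)⁻¹ * GammaFull m n t)
    - Complex.I • Sum.elim
        (Sum.elim (star (onesV (Fin m)) ᵥ* ((calA2 m)ᴴ - u2 • 1)⁻¹) (0 : Fin m → ℂ))
        (Sum.elim (star (onesV (Fin n)) ᵥ* ((calA1 n)ᴴ - u1 • 1)⁻¹) (0 : Fin n → ℂ))

/-- The column vector `û(λ)`. -/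
def uHatCol (m n : ℕ) (t : ℤ → ℤ → ℂ) (l1 l2 : ℂ) :
    ((Fin m ⊕ Fin m) ⊕ (Fin n ⊕ Fin n)) → ℂ :=
  (GammaHatFull m n t * (A2 m n - l2 • 1)⁻¹ * (A1 m n - l1 • 1)⁻¹) *ᵥ onesV (Fin n × Fin m)
    + Complex.I • Sum.elim
        (Sum.elim (0 : Fin m → ℂ) ((calA2 m - l2 • 1)⁻¹ *ᵥ onesV (Fin m)))
        (Sum.elim (0 : Fin n → ℂ) ((calA1 n - l1 • 1)⁻¹ *ᵥ onesV (Fin n)))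

/-- `P_1 = diag{I_{2m}, 0}`. -/
def P1M (m n : ℕ) :
    Matrix ((Fin m ⊕ Fin m) ⊕ (Fin n ⊕ Fin n)) ((Fin m ⊕ Fin m) ⊕ (Fin n ⊕ Fin n)) ℂ :=
  fromBlocks 1 0 0 0

/-- `P_2 = I − P_1`. -/
def P2M (m n : ℕ) :
    Matrix ((Fin m ⊕ Fin m) ⊕ (Fin n ⊕ Fin n)) ((Fin m ⊕ Fin m) ⊕ (Fin n ⊕ Fin n)) ℂ :=
  1 - P1M m n

/-- `G(λ)`, built from `g_{12}` and `g_{21}`. -/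
def GMat (m n : ℕ) (g12 : Matrix (Fin m ⊕ Fin m) (Fin n ⊕ Fin n) ℂ)
    (g21 : Matrix (Fin n ⊕ Fin n) (Fin m ⊕ Fin m) ℂ) (l1 l2 : ℂ) :
    Matrix ((Fin m ⊕ Fin m) ⊕ (Fin n ⊕ Fin n)) ((Fin m ⊕ Fin m) ⊕ (Fin n ⊕ Fin n)) ℂ :=
  fromBlocks (fromBlocks (calA2 m - l2 • 1) 0 0 (calA2 m - l2 • 1)) g12
             g21 (fromBlocks (calA1 n - l1 • 1) 0 0 (calA1 n - l1 • 1))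

/-- `G` as a matrix over the polynomial ring `ℂ[λ_1, λ_2]` (variables `X 0 = λ_1`, `X 1 = λ_2`). -/
def GPoly (m n : ℕ) (g12 : Matrix (Fin m ⊕ Fin m) (Fin n ⊕ Fin n) ℂ)
    (g21 : Matrix (Fin n ⊕ Fin n) (Fin m ⊕ Fin m) ℂ) :
    Matrix ((Fin m ⊕ Fin m) ⊕ (Fin n ⊕ Fin n)) ((Fin m ⊕ Fin m) ⊕ (Fin n ⊕ Fin n))
      (MvPolynomial (Fin 2) ℂ) :=
  fromBlocks
    (fromBlocks ((calA2 m).map MvPolynomial.C - (MvPolynomial.X 1 : MvPolynomial (Fin 2) ℂ) • 1) 0 0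
      ((calA2 m).map MvPolynomial.C - (MvPolynomial.X 1 : MvPolynomial (Fin 2) ℂ) • 1))
    (g12.map MvPolynomial.C)
    (g21.map MvPolynomial.C)
    (fromBlocks ((calA1 n).map MvPolynomial.C - (MvPolynomial.X 0 : MvPolynomial (Fin 2) ℂ) • 1) 0 0
      ((calA1 n).map MvPolynomial.C - (MvPolynomial.X 0 : MvPolynomial (Fin 2) ℂ) • 1))

/-- The vector `col[0_m; 𝟏_m; 0_n; 𝟏_n]`. -/
def eVec (m n : ℕ) : ((Fin m ⊕ Fin m) ⊕ (Fin n ⊕ Fin n)) → ℂ :=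
  Sum.elim (Sum.elim (0 : Fin m → ℂ) (onesV (Fin m))) (Sum.elim (0 : Fin n → ℂ) (onesV (Fin n)))

/-- `diag{J_{2m}U_{2m}, J_{2n}U_{2n}}`. -/
def DJU (m n : ℕ) :
    Matrix ((Fin m ⊕ Fin m) ⊕ (Fin n ⊕ Fin n)) ((Fin m ⊕ Fin m) ⊕ (Fin n ⊕ Fin n)) ℂ :=
  fromBlocks (J2 m * U2 m) 0 0 (J2 n * U2 n)

/-- The block column `col[I_m; I_m; …; I_m]`. -/
def EcolId (m n : ℕ) : Matrix (Fin n × Fin m) (Fin m) ℂ :=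
  Matrix.of fun r l => if r.2 = l then 1 else 0

-- ===== AUX =====

lemma nat_key {m n a b x y : ℕ} (ha : a < n) (hb : b < n) (hx : x < m) (hy : y < m)
    (h : m * a + x + (m * b + y) + 1 = m * n) : a + b + 1 = n ∧ x + y + 1 = m := by
  have hm : 0 < m := by omega
  have h1 : m * (a + b) + (x + y + 1) = m * n := by rw [Nat.mul_add]; linarith
  have h2 : a + b < n := by
    have : m * (a + b) < m * n := by linarith
    exact lt_of_mul_lt_mul_left this (Nat.zero_le m)
  have h3 : n < a + b + 2 := by
    have hlt : m * n < m * (a + b + 2) := by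
      have he : m * (a + b + 2) = m * (a + b) + m * 2 := by ring
      rw [he]; linarith
    exact lt_of_mul_lt_mul_left hlt (Nat.zero_le m)
  have hab : a + b + 1 = n := by omega
  refine ⟨hab, ?_⟩
  have he : m * (a + b) + m = m * n := by
    have he2 : m * n = m * (a + b + 1) := by rw [hab]
    rw [he2]; ring
  linarith

lemma UmnM_apply (m n : ℕ) (r c : Fin n × Fin m) :
    UmnM m n r c = if c = (r.1.rev, r.2.rev) then 1 else 0 := by
  unfold UmnM
  simp only [Matrix.of_apply]
  congr 1
  simp only [eq_iff_iff]
  constructor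
  · intro h
    obtain ⟨h1, h2⟩ := nat_key r.1.isLt c.1.isLt r.2.isLt c.2.isLt h
    have e1 : c.1 = r.1.rev := by apply Fin.ext; rw [Fin.val_rev]; omega
    have e2 : c.2 = r.2.rev := by apply Fin.ext; rw [Fin.val_rev]; omega
    rw [Prod.ext_iff]; exact ⟨e1, e2⟩
  · intro h
    rw [h]
    have hr1 : (r.1 : ℕ) < n := r.1.isLt
    have hr2 : (r.2 : ℕ) < m := r.2.isLt
    simp only [Fin.val_rev]
    have e1 : m * (r.1 : ℕ) + m * (n - ((r.1 : ℕ) + 1)) = m * (n - 1) := by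
      rw [← Nat.mul_add]; congr 1; omega
    have e2 : m * (n - 1) + m = m * n := by
      have he : m * n = m * ((n - 1) + 1) := by congr 1; omega
      rw [he]; ring
    have e3 : (r.2 : ℕ) + (m - ((r.2 : ℕ) + 1)) + 1 = m := by omega
    linarith

lemma UmnM_mul_apply {m n : ℕ} {ι : Type*} (A : Matrix (Fin n × Fin m) ι ℂ)
    (r : Fin n × Fin m) (c : ι) :
    (UmnM m n * A) r c = A (r.1.rev, r.2.rev) c := by
  rw [Matrix.mul_apply]
  rw [Finset.sum_eq_single (r.1.rev, r.2.rev)]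
  · rw [UmnM_apply]; simp
  · intro b _ hb; rw [UmnM_apply]; simp [hb]
  · intro hmem; exact absurd (Finset.mem_univ _) hmem

lemma mul_UmnM_apply {m n : ℕ} {ι : Type*} [Fintype ι] (A : Matrix ι (Fin n × Fin m) ℂ)
    (r : ι) (c : Fin n × Fin m) :
    (A * UmnM m n) r c = A r (c.1.rev, c.2.rev) := by
  rw [Matrix.mul_apply]
  rw [Finset.sum_eq_single (c.1.rev, c.2.rev)]
  · rw [UmnM_apply]; simp
  · intro b _ hb; rw [UmnM_apply]
    have hne : ¬(c = (b.1.rev, b.2.rev)) := by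
      intro hc; apply hb
      rw [Prod.ext_iff] at hc ⊢
      obtain ⟨hc1, hc2⟩ := hc
      exact ⟨by rw [hc1]; simp, by rw [hc2]; simp⟩
    simp [hne]
  · intro hmem; exact absurd (Finset.mem_univ _) hmem

lemma UmnM_invol (m n : ℕ) : UmnM m n * UmnM m n = 1 := by
  ext r c
  rw [UmnM_mul_apply, UmnM_apply, Matrix.one_apply]
  simp [Prod.ext_iff, eq_comm]

lemma UTU (m n : ℕ) (t : ℤ → ℤ → ℂ) :
    UmnM m n * TBT m n t * UmnM m n = (TBT m n t)ᵀ := by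
  ext r c
  rw [mul_UmnM_apply, UmnM_mul_apply, Matrix.transpose_apply]
  show TBT m n t (r.1.rev, r.2.rev) (c.1.rev, c.2.rev) = TBT m n t c r
  unfold TBT
  simp only [Matrix.of_apply, Fin.val_rev]
  have h1 : (r.1 : ℕ) < n := r.1.isLt
  have h2 : (r.2 : ℕ) < m := r.2.isLt
  have h3 : (c.1 : ℕ) < n := c.1.isLt
  have h4 : (c.2 : ℕ) < m := c.2.isLt
  congr 1 <;> omega

lemma sum_shift_base (f : ℤ → ℂ) (p : ℕ) :
    ∑ q ∈ Finset.range (p + 1), f ((p : ℤ) - q)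
      = f 0 + ∑ s ∈ Finset.range p, f ((s : ℤ) + 1) := by
  have h0 : f ((0 : ℕ) : ℤ) = f 0 := by norm_num
  calc ∑ q ∈ Finset.range (p + 1), f ((p : ℤ) - q)
      = ∑ q ∈ Finset.range (p + 1), f (((p + 1 - 1 - q : ℕ) : ℤ)) := by
        apply Finset.sum_congr rfl
        intro q hq
        have := Finset.mem_range.mp hq
        congr 1; omega
    _ = ∑ j ∈ Finset.range (p + 1), f ((j : ℕ) : ℤ) :=
        Finset.sum_range_reflect (fun j => f ((j : ℕ) : ℤ)) (p + 1)
    _ = f 0 + ∑ s ∈ Finset.range p, f ((s : ℤ) + 1) := by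
        rw [Finset.sum_range_succ', h0, add_comm]
        congr 1

lemma sum_shift (f : ℤ → ℂ) (p n : ℕ) (hp : p < n) :
    ∑ q ∈ Finset.range n, f ((p : ℤ) - q)
      = f 0 + (∑ s ∈ Finset.range p, f ((s : ℤ) + 1))
        + ∑ s ∈ Finset.range (n - 1 - p), f (-((s : ℤ) + 1)) := by
  induction n with
  | zero => omega
  | succ k ih =>
    rcases Nat.lt_or_ge p k with hpk | hpk
    · rw [Finset.sum_range_succ, ih hpk]
      have hk : k + 1 - 1 - p = (k - 1 - p) + 1 := by omega
      rw [hk, Finset.sum_range_succ]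
      have he : (p : ℤ) - k = -(((k - 1 - p : ℕ) : ℤ) + 1) := by
        push_cast; omega
      rw [he]; ring
    · have hpk' : p = k := by omega
      subst hpk'
      rw [sum_shift_base]
      simp

lemma M31_apply (m n : ℕ) (x : Fin n × Fin m) (j : Fin m) :
    M31 m n x j = if x.2 = j then 1 else 0 := by
  unfold M31 M21
  simp only [Matrix.conjTranspose_apply, Matrix.of_apply]
  rcases eq_or_ne x.2 j with h | h
  · simp [h]
  · simp [h, Ne.symm h]

lemma M32_apply (m n : ℕ) (x : Fin n × Fin m) (q : Fin n) :
    M32 m n x q = if x.1 = q then 1 else 0 := by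
  unfold M32 M22
  simp only [Matrix.conjTranspose_apply, Matrix.of_apply]
  rcases eq_or_ne x.1 q with h | h
  · simp [h]
  · simp [h, Ne.symm h]

lemma key1 (m n : ℕ) (t : ℤ → ℤ → ℂ) :
    UmnM m n * (PiHat1 m n t)ᵀ
      = Pi1 m n t * (U2 m * J2 m)
        + TBT m n t * (UmnM m n * fromCols 0 (M31 m n)) := by
  have hU2J2 : U2 m * J2 m = fromBlocks 0 (-(flipU m)) (flipU m) 0 := by
    unfold U2 J2
    rw [Matrix.fromBlocks_multiply]
    simp
  have hPi : Pi1 m n t * (U2 m * J2 m)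
      = fromCols (M31 m n * flipU m) (-(M11 m n t * flipU m)) := by
    unfold Pi1
    rw [hU2J2, Matrix.fromCols_mul_fromBlocks]
    simp [Matrix.mul_neg]
  have hsplit : UmnM m n * fromCols (0 : Matrix (Fin n × Fin m) (Fin m) ℂ) (M31 m n)
      = fromCols 0 (UmnM m n * M31 m n) := by
    rw [Matrix.mul_fromCols, Matrix.mul_zero]
  rw [hPi, hsplit, Matrix.mul_fromCols, Matrix.mul_zero]
  ext r c
  rw [UmnM_mul_apply, Matrix.transpose_apply]
  obtain ⟨p, l⟩ := r
  rcases c with j | j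
  · simp only [Matrix.add_apply, Matrix.fromCols_apply_inl, Matrix.zero_apply, add_zero]
    show PiHat1 m n t (Sum.inl j) (p.rev, l.rev) = (M31 m n * flipU m) (p, l) j
    have hR : (M31 m n * flipU m) (p, l) j
        = if (l : ℕ) + (j : ℕ) + 1 = m then 1 else 0 := by
      rw [Matrix.mul_apply, Finset.sum_eq_single l]
      · rw [M31_apply]; simp [flipU]
      · intro b _ hb; rw [M31_apply]
        simp only [if_neg (Ne.symm hb)]; ring
      · intro hmem; exact absurd (Finset.mem_univ _) hmem
    rw [hR]
    unfold PiHat1 M21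
    simp only [Matrix.fromRows_apply_inl, Matrix.of_apply]
    have hiff : (j = l.rev) ↔ ((l : ℕ) + (j : ℕ) + 1 = m) := by
      rw [Fin.ext_iff, Fin.val_rev]
      have := l.isLt; have := j.isLt
      omega
    by_cases h : j = l.rev
    · rw [if_pos h, if_pos (hiff.mp h)]
    · rw [if_neg h, if_neg (fun hc => h (hiff.mpr hc))]
  · simp only [Matrix.add_apply, Matrix.fromCols_apply_inr, Matrix.neg_apply]
    show PiHat1 m n t (Sum.inr j) (p.rev, l.rev)
      = -((M11 m n t * flipU m) (p, l) j) + (TBT m n t * (UmnM m n * M31 m n)) (p, l) j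
    set d : ℤ := (l : ℤ) - ((j.rev : Fin m) : ℕ) with hd
    have hjd : (j : ℤ) - (((l.rev : Fin m) : ℕ) : ℤ) = d := by
      rw [hd]; simp only [Fin.val_rev]
      have := l.isLt; have := j.isLt
      push_cast; omega
    have hB : (M11 m n t * flipU m) (p, l) j = M11 m n t (p, l) j.rev := by
      rw [Matrix.mul_apply, Finset.sum_eq_single j.rev]
      · unfold flipU
        simp only [Matrix.of_apply, Fin.val_rev]
        rw [if_pos (by have := j.isLt; omega), mul_one]
      · intro b _ hb
        unfold flipU
        simp only [Matrix.of_apply]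
        rw [if_neg, mul_zero]
        intro hc; apply hb; apply Fin.ext; rw [Fin.val_rev]
        have := j.isLt; omega
      · intro hmem; exact absurd (Finset.mem_univ _) hmem
    have hC : (TBT m n t * (UmnM m n * M31 m n)) (p, l) j
        = ∑ q : Fin n, t ((p : ℤ) - (q : ℕ)) d := by
      rw [Matrix.mul_apply, Fintype.sum_prod_type]
      have hinner : ∀ q : Fin n,
          (∑ k : Fin m, TBT m n t (p, l) (q, k) * (UmnM m n * M31 m n) (q, k) j)
            = t ((p : ℤ) - (q : ℕ)) d := by
        intro q
        rw [Finset.sum_eq_single j.rev]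
        · rw [UmnM_mul_apply, M31_apply]
          simp only [Fin.rev_rev, if_true]
          rw [mul_one]
          unfold TBT; simp only [Matrix.of_apply]; rw [hd]
        · intro b _ hb
          rw [UmnM_mul_apply, M31_apply]
          simp only
          rw [if_neg, mul_zero]
          intro hc
          exact hb (by rw [← hc, Fin.rev_rev])
        · intro hmem; exact absurd (Finset.mem_univ _) hmem
      rw [Finset.sum_congr rfl (fun q _ => hinner q)]
    rw [hB, hC]
    unfold PiHat1 M41 M11
    simp only [Matrix.fromRows_apply_inr, Matrix.of_apply]
    rw [hjd, ← hd]
    have hprev : ((p.rev : Fin n) : ℕ) = n - 1 - (p : ℕ) := by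
      rw [Fin.val_rev]; omega
    rw [hprev]
    have hsum : ∑ q : Fin n, t ((p : ℤ) - (q : ℕ)) d
        = ∑ q ∈ Finset.range n, (fun z => t z d) ((p : ℤ) - q) := by
      rw [← Fin.sum_univ_eq_sum_range]
    rw [hsum, sum_shift (fun z => t z d) p n p.isLt]
    ring

lemma key2 (m n : ℕ) (t : ℤ → ℤ → ℂ) :
    UmnM m n * (PiHat2 m n t)ᵀ
      = Pi2 m n t * (U2 n * J2 n)
        + TBT m n t * (UmnM m n * fromCols 0 (M32 m n)) := by
  have hU2J2 : U2 n * J2 n = fromBlocks 0 (-(flipU n)) (flipU n) 0 := by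
    unfold U2 J2
    rw [Matrix.fromBlocks_multiply]
    simp
  have hPi : Pi2 m n t * (U2 n * J2 n)
      = fromCols (M32 m n * flipU n) (-(M12 m n t * flipU n)) := by
    unfold Pi2
    rw [hU2J2, Matrix.fromCols_mul_fromBlocks]
    simp [Matrix.mul_neg]
  have hsplit : UmnM m n * fromCols (0 : Matrix (Fin n × Fin m) (Fin n) ℂ) (M32 m n)
      = fromCols 0 (UmnM m n * M32 m n) := by
    rw [Matrix.mul_fromCols, Matrix.mul_zero]
  rw [hPi, hsplit, Matrix.mul_fromCols, Matrix.mul_zero]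
  ext r c
  rw [UmnM_mul_apply, Matrix.transpose_apply]
  obtain ⟨p, l⟩ := r
  rcases c with q | q
  · simp only [Matrix.add_apply, Matrix.fromCols_apply_inl, Matrix.zero_apply, add_zero]
    show PiHat2 m n t (Sum.inl q) (p.rev, l.rev) = (M32 m n * flipU n) (p, l) q
    have hR : (M32 m n * flipU n) (p, l) q
        = if (p : ℕ) + (q : ℕ) + 1 = n then 1 else 0 := by
      rw [Matrix.mul_apply, Finset.sum_eq_single p]
      · rw [M32_apply]; simp [flipU]
      · intro b _ hb; rw [M32_apply]
        simp only [if_neg (Ne.symm hb)]; ring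
      · intro hmem; exact absurd (Finset.mem_univ _) hmem
    rw [hR]
    unfold PiHat2 M22
    simp only [Matrix.fromRows_apply_inl, Matrix.of_apply]
    have hiff : (q = p.rev) ↔ ((p : ℕ) + (q : ℕ) + 1 = n) := by
      rw [Fin.ext_iff, Fin.val_rev]
      have := p.isLt; have := q.isLt
      omega
    by_cases h : q = p.rev
    · rw [if_pos h, if_pos (hiff.mp h)]
    · rw [if_neg h, if_neg (fun hc => h (hiff.mpr hc))]
  · simp only [Matrix.add_apply, Matrix.fromCols_apply_inr, Matrix.neg_apply]
    show PiHat2 m n t (Sum.inr q) (p.rev, l.rev)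
      = -((M12 m n t * flipU n) (p, l) q) + (TBT m n t * (UmnM m n * M32 m n)) (p, l) q
    have hqr : ((q : ℕ) : ℤ) - (((p.rev : Fin n) : ℕ) : ℤ)
        = ((p : ℕ) : ℤ) - (((q.rev : Fin n) : ℕ) : ℤ) := by
      simp only [Fin.val_rev]
      have := p.isLt; have := q.isLt
      push_cast; omega
    have hB : (M12 m n t * flipU n) (p, l) q = M12 m n t (p, l) q.rev := by
      rw [Matrix.mul_apply, Finset.sum_eq_single q.rev]
      · unfold flipU
        simp only [Matrix.of_apply, Fin.val_rev]
        rw [if_pos (by have := q.isLt; omega), mul_one]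
      · intro b _ hb
        unfold flipU
        simp only [Matrix.of_apply]
        rw [if_neg, mul_zero]
        intro hc; apply hb; apply Fin.ext; rw [Fin.val_rev]
        have := q.isLt; omega
      · intro hmem; exact absurd (Finset.mem_univ _) hmem
    have hC : (TBT m n t * (UmnM m n * M32 m n)) (p, l) q
        = ∑ k : Fin m, t (((p : ℕ) : ℤ) - (((q.rev : Fin n) : ℕ) : ℤ)) (((l : ℕ) : ℤ) - ((k : ℕ) : ℤ)) := by
      rw [Matrix.mul_apply, Fintype.sum_prod_type]
      rw [Finset.sum_eq_single q.rev]
      · apply Finset.sum_congr rfl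
        intro k _
        rw [UmnM_mul_apply, M32_apply]
        simp only [Fin.rev_rev, if_true]
        rw [mul_one]
        unfold TBT; simp only [Matrix.of_apply]
      · intro b _ hb
        apply Finset.sum_eq_zero
        intro k _
        rw [UmnM_mul_apply, M32_apply]
        simp only
        rw [if_neg, mul_zero]
        intro hc
        exact hb (by rw [← hc, Fin.rev_rev])
      · intro hmem; exact absurd (Finset.mem_univ _) hmem
    rw [hB, hC]
    unfold PiHat2 M42 M12 m42e m12e
    simp only [Matrix.fromRows_apply_inr, Matrix.of_apply]
    rw [hqr]
    have hlrev : ((l.rev : Fin m) : ℕ) = m - 1 - (l : ℕ) := by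
      rw [Fin.val_rev]; omega
    rw [hlrev]
    have hsum : ∑ k : Fin m, t (((p : ℕ) : ℤ) - (((q.rev : Fin n) : ℕ) : ℤ)) (((l : ℕ) : ℤ) - ((k : ℕ) : ℤ))
        = ∑ k ∈ Finset.range m,
            (fun z => t (((p : ℕ) : ℤ) - (((q.rev : Fin n) : ℕ) : ℤ)) z) (((l : ℕ) : ℤ) - k) := by
      rw [← Fin.sum_univ_eq_sum_range]
    rw [hsum, sum_shift _ (l : ℕ) m l.isLt]
    ring

lemma cancel_left {k : Type*} [Fintype k] [DecidableEq k] {A B : Matrix k k ℂ}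
    (h : A * B = 1) {ι : Type*} (X : Matrix k ι ℂ) : A * (B * X) = X := by
  rw [← Matrix.mul_assoc, h, Matrix.one_mul]


/-- `Γ̂_1^τ = UΓ_1U_{2m}J_{2m} + [0 M_{31}]` and
`Γ̂_2^τ = UΓ_2U_{2n}J_{2n} + [0 M_{32}]`. -/
theorem GammaHat_transpose (m n : ℕ) (hm : 0 < m) (hn : 0 < n) (t : ℤ → ℤ → ℂ)
    (hT : IsUnit (TBT m n t)) :
    (GamHat1 m n t)ᵀ
        = UmnM m n * Gam1 m n t * (U2 m * J2 m)
          + fromCols (0 : Matrix (Fin n × Fin m) (Fin m) ℂ) (M31 m n) ∧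
    (GamHat2 m n t)ᵀ
        = UmnM m n * Gam2 m n t * (U2 n * J2 n)
          + fromCols (0 : Matrix (Fin n × Fin m) (Fin n) ℂ) (M32 m n) := by
  have hdet : IsUnit (TBT m n t).det := (Matrix.isUnit_iff_isUnit_det _).mp hT
  have hTRinv : TBT m n t * (TBT m n t)⁻¹ = 1 := Matrix.mul_nonsing_inv _ hdet
  have hRTinv : (TBT m n t)⁻¹ * TBT m n t = 1 := Matrix.nonsing_inv_mul _ hdet
  have hU := UmnM_invol m n
  have hRT : ((TBT m n t)⁻¹)ᵀ = UmnM m n * (TBT m n t)⁻¹ * UmnM m n := by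
    rw [Matrix.transpose_nonsing_inv]
    apply Matrix.inv_eq_right_inv
    rw [← UTU m n t]
    calc UmnM m n * TBT m n t * UmnM m n * (UmnM m n * (TBT m n t)⁻¹ * UmnM m n)
        = UmnM m n * (TBT m n t * (UmnM m n * (UmnM m n * ((TBT m n t)⁻¹ * UmnM m n)))) := by
          simp only [Matrix.mul_assoc]
      _ = 1 := by
          rw [cancel_left hU, cancel_left hTRinv, hU]
  constructor
  · unfold GamHat1 Gam1
    rw [Matrix.transpose_mul, hRT, Matrix.mul_assoc (UmnM m n * (TBT m n t)⁻¹), key1 m n t,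
      Matrix.mul_add]
    congr 1
    · simp only [Matrix.mul_assoc]
    · rw [Matrix.mul_assoc, cancel_left hRTinv, cancel_left hU]
  · unfold GamHat2 Gam2
    rw [Matrix.transpose_mul, hRT, Matrix.mul_assoc (UmnM m n * (TBT m n t)⁻¹), key2 m n t,
      Matrix.mul_add]
    congr 1
    · simp only [Matrix.mul_assoc]
    · rw [Matrix.mul_assoc, cancel_left hRTinv, cancel_left hU]


end
end

section
/- For all complex μ1, μ2 not in {i/2, −i/2}: 𝟏^*(A_1^* − μ1 I)^{-1}(A_2^* − μ2 I)^{-1} = ((μ1 − i/2)/(μ1 + i/2))^n · ((μ2 − i/2)/(μ2 + i/2))^m · 𝟏^*(A_1^* + μ1 I)^{-1}(A_2^* + μ2 I)^{-1} · U. -/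
open Matrix

noncomputable section

section Aux
open Kronecker

/-- `ψ(u) = (u − i/2)/(u + i/2)`. -/
def psiD (u : ℂ) : ℂ := (u - Complex.I / 2) / (u + Complex.I / 2)

/-- Candidate row vector `w` with `w ᵥ* (𝒜ᴴ − u) = 𝟏ᵀ`. -/
def wr (k : ℕ) (u : ℂ) : Fin k → ℂ := fun p => -(psiD u) ^ (p : ℕ) / (u + Complex.I / 2)

lemma den_ne (u : ℂ) (hu' : u ≠ -(Complex.I / 2)) : u + Complex.I / 2 ≠ 0 := by
  intro h
  exact hu' (by linear_combination h)

lemma den_ne' (u : ℂ) (hu : u ≠ Complex.I / 2) : u - Complex.I / 2 ≠ 0 := by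
  intro h
  exact hu (by linear_combination h)

lemma star_aC (z : ℤ) :
    star (aC z) = if z < 0 then 0 else if z = 0 then -(Complex.I / 2) else -Complex.I := by
  unfold aC
  split_ifs <;> simp [Complex.star_def, Complex.conj_I, map_div₀] <;> ring

lemma oneD (k : ℕ) (u : ℂ) (hu' : u ≠ -(Complex.I / 2)) :
    wr k u ᵥ* ((calA1 k)ᴴ - u • (1 : Matrix (Fin k) (Fin k) ℂ)) = fun _ => 1 := by
  have hden : u + Complex.I / 2 ≠ 0 := den_ne u hu'
  have hpsi1 : psiD u - 1 = -Complex.I / (u + Complex.I / 2) := by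
    rw [eq_div_iff hden, sub_mul, psiD, div_mul_cancel₀ _ hden]; ring
  have hpsine : psiD u ≠ 1 := by
    intro h
    unfold psiD at h
    rw [div_eq_one_iff_eq hden] at h
    exact Complex.I_ne_zero (by linear_combination -h)
  funext l
  set G : ℕ → ℂ := fun i =>
    if i < (l : ℕ) then Complex.I * (psiD u) ^ i / (u + Complex.I / 2)
    else if i = (l : ℕ) then (psiD u) ^ (l : ℕ) else 0 with hG
  have hterm : ∀ p : Fin k,
      wr k u p * (((calA1 k)ᴴ - u • (1 : Matrix (Fin k) (Fin k) ℂ)) p l) = G (p : ℕ) := by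
    intro p
    have : ((calA1 k)ᴴ - u • (1 : Matrix (Fin k) (Fin k) ℂ)) p l
        = star (aC ((l : ℤ) - (p : ℤ))) - u * (if p = l then 1 else 0) := by
      simp [Matrix.sub_apply, Matrix.conjTranspose_apply, Matrix.smul_apply, Matrix.one_apply,
        calA1, smul_eq_mul]
    rw [this, star_aC]
    rcases lt_trichotomy (p : ℕ) (l : ℕ) with h | h | h
    · have hne : p ≠ l := Fin.ne_of_val_ne (by omega)
      rw [if_neg (by omega), if_neg (by omega), if_neg hne]
      simp only [hG, if_pos h]
      unfold wr
      ring
    · have hpl : p = l := Fin.ext h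
      rw [if_neg (by omega), if_pos (by omega), if_pos hpl]
      simp only [hG, if_neg (by omega : ¬ ((p:ℕ) < (l:ℕ))), if_pos h]
      unfold wr
      rw [h, div_mul_eq_mul_div, div_eq_iff hden]
      ring
    · have hne : p ≠ l := Fin.ne_of_val_ne (by omega)
      rw [if_pos (by omega), if_neg hne]
      simp only [hG, if_neg (by omega : ¬ ((p:ℕ) < (l:ℕ))),
        if_neg (by omega : ¬ ((p:ℕ) = (l:ℕ)))]
      ring
  have hsum : (wr k u ᵥ* ((calA1 k)ᴴ - u • (1 : Matrix (Fin k) (Fin k) ℂ))) l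
      = ∑ i ∈ Finset.range k, G i := by
    rw [Matrix.vecMul, dotProduct, ← Fin.sum_univ_eq_sum_range]
    exact Finset.sum_congr rfl fun p _ => hterm p
  rw [hsum]
  have hlk : (l : ℕ) < k := l.isLt
  have hsub : ∑ i ∈ Finset.range k, G i = ∑ i ∈ Finset.range ((l : ℕ) + 1), G i := by
    refine (Finset.sum_subset (by intro x hx; simp at hx ⊢; omega) ?_).symm
    intro x _ hx
    simp only [Finset.mem_range, not_lt] at hx
    rw [hG]
    simp only
    rw [if_neg (by omega), if_neg (by omega)]
  rw [hsub, Finset.sum_range_succ]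
  have h1 : ∑ i ∈ Finset.range (l : ℕ), G i
      = Complex.I * (∑ i ∈ Finset.range (l : ℕ), psiD u ^ i) / (u + Complex.I / 2) := by
    rw [Finset.mul_sum, Finset.sum_div]
    refine Finset.sum_congr rfl fun i hi => ?_
    simp only [Finset.mem_range] at hi
    simp only [hG, if_pos hi]
  rw [h1]
  simp only [hG, lt_self_iff_false, if_false, if_true, eq_self_iff_true]
  have hgs : (∑ i ∈ Finset.range (l : ℕ), psiD u ^ i) * (psiD u - 1)
      = psiD u ^ (l : ℕ) - 1 := geom_sum_mul _ _
  have hd : (psiD u - 1) * (u + Complex.I / 2) = -Complex.I := by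
    rw [hpsi1, div_mul_cancel₀ _ hden]
  rw [div_add' _ _ _ hden, div_eq_one_iff_eq hden]
  linear_combination (-(u + Complex.I / 2)) * hgs
    + (∑ i ∈ Finset.range (l : ℕ), psiD u ^ i) * hd

lemma A1h (m n : ℕ) (u : ℂ) :
    (A1 m n)ᴴ - u • (1 : Matrix (Fin n × Fin m) (Fin n × Fin m) ℂ)
      = Matrix.of fun r c => (((calA1 n)ᴴ - u • 1) r.1 c.1) * (if r.2 = c.2 then (1:ℂ) else 0) := by
  ext ⟨p, j⟩ ⟨q, l⟩
  by_cases hjl : j = l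
  · subst hjl
    simp [A1, calA1, Matrix.one_apply, Prod.ext_iff, Matrix.sub_apply,
      Matrix.conjTranspose_apply, Matrix.smul_apply, smul_eq_mul]
  · have hlj : ¬ (l = j) := fun h => hjl h.symm
    simp [A1, calA1, Matrix.one_apply, Prod.ext_iff, hjl, hlj, Matrix.sub_apply,
      Matrix.conjTranspose_apply, Matrix.smul_apply, smul_eq_mul]

lemma A2h (m n : ℕ) (u : ℂ) :
    (A2 m n)ᴴ - u • (1 : Matrix (Fin n × Fin m) (Fin n × Fin m) ℂ)
      = Matrix.of fun r c => (if r.1 = c.1 then (1:ℂ) else 0) * (((calA1 m)ᴴ - u • 1) r.2 c.2) := by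
  ext ⟨p, j⟩ ⟨q, l⟩
  by_cases hpq : p = q
  · subst hpq
    simp [A2, calA1, Matrix.one_apply, Prod.ext_iff, Matrix.sub_apply,
      Matrix.conjTranspose_apply, Matrix.smul_apply, smul_eq_mul]
  · have hqp : ¬ (q = p) := fun h => hpq h.symm
    simp [A2, calA1, Matrix.one_apply, Prod.ext_iff, hpq, hqp, Matrix.sub_apply,
      Matrix.conjTranspose_apply, Matrix.smul_apply, smul_eq_mul]

lemma bigfact (m n : ℕ) (u1 u2 : ℂ) :
    ((A2 m n)ᴴ - u2 • 1) * ((A1 m n)ᴴ - u1 • 1)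
      = ((calA1 n)ᴴ - u1 • 1) ⊗ₖ ((calA1 m)ᴴ - u2 • 1) := by
  rw [A1h, A2h]
  ext ⟨p, j⟩ ⟨q, l⟩
  rw [Matrix.mul_apply, Fintype.sum_prod_type]
  simp only [Matrix.of_apply, kroneckerMap_apply]
  rw [Finset.sum_eq_single p]
  · rw [Finset.sum_eq_single l]
    · simp [mul_comm]
    · intro b _ hb; simp [hb]
    · intro h; exact absurd (Finset.mem_univ l) h
  · intro a _ ha
    simp [Ne.symm ha]
  · intro h; exact absurd (Finset.mem_univ p) h

lemma vecMul_kron {n m : ℕ} (v1 : Fin n → ℂ) (v2 : Fin m → ℂ)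
    (F : Matrix (Fin n) (Fin n) ℂ) (G : Matrix (Fin m) (Fin m) ℂ) :
    (fun r : Fin n × Fin m => v1 r.1 * v2 r.2) ᵥ* (F ⊗ₖ G)
      = fun r => (v1 ᵥ* F) r.1 * (v2 ᵥ* G) r.2 := by
  funext ⟨q, l⟩
  simp only [Matrix.vecMul, dotProduct, Fintype.sum_prod_type, kroneckerMap_apply]
  rw [Finset.sum_mul_sum]
  exact Finset.sum_congr rfl fun a _ => Finset.sum_congr rfl fun b _ => by ring

lemma detC (k : ℕ) (u : ℂ) :
    ((calA1 k)ᴴ - u • (1 : Matrix (Fin k) (Fin k) ℂ)).det = (-(Complex.I / 2) - u) ^ k := by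
  rw [Matrix.det_of_upperTriangular]
  · have : ∀ i : Fin k, ((calA1 k)ᴴ - u • (1 : Matrix (Fin k) (Fin k) ℂ)) i i
        = -(Complex.I / 2) - u := by
      intro i
      simp [calA1, aC, Matrix.sub_apply, Matrix.conjTranspose_apply, Matrix.smul_apply,
        Matrix.one_apply, Complex.star_def, Complex.conj_I, map_div₀, smul_eq_mul, neg_div]
    rw [Finset.prod_congr rfl fun i _ => this i, Finset.prod_const, Finset.card_univ,
      Fintype.card_fin]
  · intro i j hij
    have hji : (j : ℕ) < (i : ℕ) := hij
    have h0 : aC (((j : ℕ) : ℤ) - ((i : ℕ) : ℤ)) = 0 := by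
      unfold aC
      rw [if_pos (by omega)]
    have hne : i ≠ j := ne_of_gt hij
    simp [calA1, Matrix.sub_apply, Matrix.conjTranspose_apply, Matrix.smul_apply,
      Matrix.one_apply, h0, hne]

lemma Umn_kron (m n : ℕ) (hm : 0 < m) (hn : 0 < n) :
    UmnM m n = flipU n ⊗ₖ flipU m := by
  ext ⟨p, j⟩ ⟨q, l⟩
  have hp := p.isLt; have hq := q.isLt; have hj := j.isLt; have hl := l.isLt
  simp only [UmnM, flipU, Matrix.of_apply, kroneckerMap_apply]
  by_cases h1 : (p : ℕ) + q + 1 = n <;> by_cases h2 : (j : ℕ) + l + 1 = m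
  · rw [if_pos h1, if_pos h2, if_pos]
    · ring
    · have : m * n = m * ((p : ℕ) + q + 1) := by rw [h1]
      rw [Nat.mul_add, Nat.mul_add, Nat.mul_one] at this
      linarith
  · rw [if_pos h1, if_neg h2, if_neg]
    · ring
    · intro h
      have : m * n = m * ((p : ℕ) + q + 1) := by rw [h1]
      rw [Nat.mul_add, Nat.mul_add, Nat.mul_one] at this
      exact h2 (by linarith)
  all_goals {
    rw [if_neg h1, if_neg]
    · ring
    · intro h
      apply h1
      rcases lt_trichotomy ((p : ℕ) + q + 1) n with hc | hc | hc
      · exfalso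
        have h2n : (p : ℕ) + q + 2 ≤ n := by omega
        have := Nat.mul_le_mul_left m h2n
        rw [Nat.mul_add, Nat.mul_add] at this
        linarith
      · exact hc
      · exfalso
        have h2n : n ≤ (p : ℕ) + q := by omega
        have := Nat.mul_le_mul_left m h2n
        rw [Nat.mul_add] at this
        linarith }

lemma vecMul_flip (k : ℕ) (v : Fin k → ℂ) (l : Fin k) :
    (v ᵥ* flipU k) l = v ⟨k - 1 - (l : ℕ), by have := l.isLt; omega⟩ := by
  have hlk := l.isLt
  rw [Matrix.vecMul, dotProduct]
  rw [Finset.sum_eq_single (⟨k - 1 - (l : ℕ), by omega⟩ : Fin k)]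
  · rw [flipU]
    simp only [Matrix.of_apply]
    rw [if_pos (show k - 1 - (l : ℕ) + (l : ℕ) + 1 = k by omega)]
    ring
  · intro p _ hp
    rw [flipU]
    simp only [Matrix.of_apply]
    rw [if_neg]
    · ring
    · intro h
      apply hp
      apply Fin.ext
      show (p : ℕ) = k - 1 - (l : ℕ)
      omega
  · intro h; exact absurd (Finset.mem_univ _) h

lemma scal (u : ℂ) (hu : u ≠ Complex.I / 2) (hu' : u ≠ -(Complex.I / 2)) (k p : ℕ)
    (hp : p < k) :
    ((u - Complex.I / 2) / (u + Complex.I / 2)) ^ k * wr k (-u) ⟨k - 1 - p, by omega⟩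
      = - wr k u ⟨p, hp⟩ := by
  have h1 : u + Complex.I / 2 ≠ 0 := den_ne u hu'
  have h2 : u - Complex.I / 2 ≠ 0 := den_ne' u hu
  have hne : -u + Complex.I / 2 ≠ 0 := by
    intro h; exact h2 (by linear_combination -h)
  obtain ⟨q, rfl⟩ : ∃ q, k = q + (p + 1) := ⟨k - 1 - p, by omega⟩
  have hidx : q + (p + 1) - 1 - p = q := by omega
  unfold wr psiD
  simp only [hidx]
  have hflip : (-u - Complex.I / 2) / (-u + Complex.I / 2)
      = (u + Complex.I / 2) / (u - Complex.I / 2) := by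
    rw [div_eq_div_iff hne h2]; ring
  rw [hflip, pow_add,
    show -u + Complex.I / 2 = -(u - Complex.I / 2) by ring, div_pow, div_pow, div_pow,
    div_pow, neg_div_neg_eq, neg_div, neg_neg, div_div, div_div,
    div_mul_div_comm, div_mul_div_comm,
    div_eq_div_iff
      (mul_ne_zero (mul_ne_zero (pow_ne_zero _ h1) (pow_ne_zero _ h1))
        (mul_ne_zero (pow_ne_zero _ h2) h2))
      (mul_ne_zero (pow_ne_zero _ h1) h1)]
  ring

end Aux

/-- the row-vector symmetry relation (formula (2.37)). -/
theorem F_row_symmetry (m n : ℕ) (hm : 0 < m) (hn : 0 < n) (u1 u2 : ℂ)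
    (hu1 : u1 ≠ Complex.I / 2) (hu1' : u1 ≠ -(Complex.I / 2))
    (hu2 : u2 ≠ Complex.I / 2) (hu2' : u2 ≠ -(Complex.I / 2)) :
    star (onesV (Fin n × Fin m)) ᵥ* (((A1 m n)ᴴ - u1 • 1)⁻¹ * ((A2 m n)ᴴ - u2 • 1)⁻¹)
      = (((u1 - Complex.I / 2) / (u1 + Complex.I / 2)) ^ n *
          ((u2 - Complex.I / 2) / (u2 + Complex.I / 2)) ^ m) •
          (star (onesV (Fin n × Fin m)) ᵥ*
            (((A1 m n)ᴴ + u1 • 1)⁻¹ * ((A2 m n)ᴴ + u2 • 1)⁻¹ * UmnM m n)) := by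
  
  classical
  have hones : star (onesV (Fin n × Fin m)) = onesV (Fin n × Fin m) := by
    funext r; simp [onesV]
  have e1 : (A1 m n)ᴴ + u1 • (1 : Matrix (Fin n × Fin m) (Fin n × Fin m) ℂ)
      = (A1 m n)ᴴ - (-u1) • 1 := by rw [neg_smul, sub_neg_eq_add]
  have e2 : (A2 m n)ᴴ + u2 • (1 : Matrix (Fin n × Fin m) (Fin n × Fin m) ℂ)
      = (A2 m n)ᴴ - (-u2) • 1 := by rw [neg_smul, sub_neg_eq_add]
  have hu1n : -u1 ≠ -(Complex.I / 2) := fun h => hu1 (by linear_combination -h)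
  have hu2n : -u2 ≠ -(Complex.I / 2) := fun h => hu2 (by linear_combination -h)
  -- the two factored products
  have hP := bigfact m n u1 u2
  have hP' := bigfact m n (-u1) (-u2)
  -- determinants
  have hdet : IsUnit (((A2 m n)ᴴ - u2 • 1) * ((A1 m n)ᴴ - u1 • 1)).det := by
    rw [hP, Matrix.det_kronecker, detC, detC]
    have d1 : -(Complex.I / 2) - u1 ≠ 0 := fun h => hu1' (by linear_combination -h)
    have d2 : -(Complex.I / 2) - u2 ≠ 0 := fun h => hu2' (by linear_combination -h)
    exact (mul_ne_zero (pow_ne_zero _ (pow_ne_zero _ d1)) (pow_ne_zero _ (pow_ne_zero _ d2))).isUnit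
  have hdet' : IsUnit (((A2 m n)ᴴ - (-u2) • 1) * ((A1 m n)ᴴ - (-u1) • 1)).det := by
    rw [hP', Matrix.det_kronecker, detC, detC]
    have d1 : -(Complex.I / 2) - (-u1) ≠ 0 := fun h => hu1 (by linear_combination h)
    have d2 : -(Complex.I / 2) - (-u2) ≠ 0 := fun h => hu2 (by linear_combination h)
    exact (mul_ne_zero (pow_ne_zero _ (pow_ne_zero _ d1)) (pow_ne_zero _ (pow_ne_zero _ d2))).isUnit
  -- the row vector computations
  have key : ∀ (v1 v2 : ℂ) (hv1 : v1 ≠ -(Complex.I / 2)) (hv2 : v2 ≠ -(Complex.I / 2))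
      (hd : IsUnit (((A2 m n)ᴴ - v2 • 1) * ((A1 m n)ᴴ - v1 • 1)).det),
      onesV (Fin n × Fin m) ᵥ* (((A2 m n)ᴴ - v2 • 1) * ((A1 m n)ᴴ - v1 • 1))⁻¹
        = fun r => wr n v1 r.1 * wr m v2 r.2 := by
    intro v1 v2 hv1 hv2 hd
    have h1 : (fun r : Fin n × Fin m => wr n v1 r.1 * wr m v2 r.2)
        ᵥ* (((A2 m n)ᴴ - v2 • 1) * ((A1 m n)ᴴ - v1 • 1)) = onesV (Fin n × Fin m) := by
      rw [bigfact m n v1 v2, vecMul_kron, oneD n v1 hv1, oneD m v2 hv2]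
      funext r; simp [onesV]
    calc onesV (Fin n × Fin m) ᵥ* (((A2 m n)ᴴ - v2 • 1) * ((A1 m n)ᴴ - v1 • 1))⁻¹
        = ((fun r : Fin n × Fin m => wr n v1 r.1 * wr m v2 r.2)
            ᵥ* (((A2 m n)ᴴ - v2 • 1) * ((A1 m n)ᴴ - v1 • 1)))
            ᵥ* (((A2 m n)ᴴ - v2 • 1) * ((A1 m n)ᴴ - v1 • 1))⁻¹ := by rw [h1]
      _ = (fun r : Fin n × Fin m => wr n v1 r.1 * wr m v2 r.2)
            ᵥ* ((((A2 m n)ᴴ - v2 • 1) * ((A1 m n)ᴴ - v1 • 1))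
              * (((A2 m n)ᴴ - v2 • 1) * ((A1 m n)ᴴ - v1 • 1))⁻¹) := by
          rw [Matrix.vecMul_vecMul]
      _ = fun r : Fin n × Fin m => wr n v1 r.1 * wr m v2 r.2 := by
          rw [Matrix.mul_nonsing_inv _ hd, Matrix.vecMul_one]
  rw [hones, e1, e2, ← Matrix.mul_inv_rev, ← Matrix.mul_inv_rev,
    ← Matrix.vecMul_vecMul,
    key u1 u2 hu1' hu2' hdet, key (-u1) (-u2) hu1n hu2n hdet',
    Umn_kron m n hm hn, vecMul_kron]
  funext r
  obtain ⟨p, j⟩ := r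
  simp only [Pi.smul_apply, smul_eq_mul]
  rw [vecMul_flip, vecMul_flip]
  have s1 := scal u1 hu1 hu1' n (p : ℕ) p.isLt
  have s2 := scal u2 hu2 hu2' m (j : ℕ) j.isLt
  calc wr n u1 p * wr m u2 j
      = (- wr n u1 ⟨(p : ℕ), p.isLt⟩) * (- wr m u2 ⟨(j : ℕ), j.isLt⟩) := by
        rw [neg_mul_neg]
    _ = (((u1 - Complex.I / 2) / (u1 + Complex.I / 2)) ^ n
          * wr n (-u1) ⟨n - 1 - (p : ℕ), by have := p.isLt; omega⟩)
        * (((u2 - Complex.I / 2) / (u2 + Complex.I / 2)) ^ m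
          * wr m (-u2) ⟨m - 1 - (j : ℕ), by have := j.isLt; omega⟩) := by
        rw [s1, s2]
    _ = ((u1 - Complex.I / 2) / (u1 + Complex.I / 2)) ^ n
          * ((u2 - Complex.I / 2) / (u2 + Complex.I / 2)) ^ m
          * (wr n (-u1) ⟨n - 1 - (p : ℕ), by have := p.isLt; omega⟩
            * wr m (-u2) ⟨m - 1 - (j : ℕ), by have := j.isLt; omega⟩) := by ring

end
end

section
/- (Lemma 3.1) Let g_{12} be an arbitrary 2m×2n complex matrix, set g_{21} = −U_{2n}J_{2n}g_{12}^τ J_{2m}U_{2m}, and form G(λ) and θ as defined. For λ1, λ2 ≠ i/2 with det G(λ) ≠ 0, define û(λ) = −i·(λ1 − i/2)^{-n}(λ2 − i/2)^{-m}·θ(λ)·G(λ)^{-1}·col[0_m; 𝟏_m; 0_n; 𝟏_n]; for μ1, μ2 not in {i/2, −i/2} with det G(μ) ≠ 0, define u(μ) = ((μ1 − i/2)/(μ1 + i/2))^n·((μ2 − i/2)/(μ2 + i/2))^m·û(μ)^τ·diag{J_{2m}U_{2m}, J_{2n}U_{2n}}. Then u(μ)·((λ2 − μ2)P_1 − (λ1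 − μ1)P_2)·û(λ) = 0; consequently i(λ1 − μ1)^{-1}u(μ)P_1û(λ) = i(λ2 − μ2)^{-1}u(μ)P_2û(λ) whenever additionally λ1 ≠ μ1 and λ2 ≠ μ2. -/
open Matrix

noncomputable section

section Lemma31Aux

open Matrix

lemma flipU_apply_rev {k : ℕ} (i j : Fin k) :
    flipU k i j = if j = i.rev then 1 else 0 := by
  have h : ((i : ℕ) + (j : ℕ) + 1 = k) ↔ j = i.rev := by
    rw [Fin.ext_iff, Fin.val_rev]
    omega
  simp only [flipU, Matrix.of_apply]
  rw [if_congr h rfl rfl]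

lemma flipU_apply_rev' {k : ℕ} (i j : Fin k) :
    flipU k i j = if i = j.rev then 1 else 0 := by
  have h : ((i : ℕ) + (j : ℕ) + 1 = k) ↔ i = j.rev := by
    rw [Fin.ext_iff, Fin.val_rev]
    omega
  simp only [flipU, Matrix.of_apply]
  rw [if_congr h rfl rfl]

lemma flipU_mul {k : ℕ} (B : Matrix (Fin k) (Fin k) ℂ) :
    flipU k * B = B.submatrix Fin.rev id := by
  ext i j
  rw [Matrix.mul_apply]
  simp only [flipU_apply_rev, ite_mul, one_mul, zero_mul]
  rw [Finset.sum_ite_eq' Finset.univ (i.rev) (fun t => B t j)]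
  simp [Matrix.submatrix_apply]

lemma mul_flipU {k : ℕ} (B : Matrix (Fin k) (Fin k) ℂ) :
    B * flipU k = B.submatrix id Fin.rev := by
  ext i j
  rw [Matrix.mul_apply]
  simp only [flipU_apply_rev', mul_ite, mul_one, mul_zero]
  rw [Finset.sum_ite_eq' Finset.univ (j.rev) (fun t => B i t)]
  simp [Matrix.submatrix_apply]

lemma calA1_eq_calA2 (k : ℕ) : calA1 k = calA2 k := rfl

lemma flip_comm_calA2 {k : ℕ} (x : ℂ) :
    flipU k * (calA2 k - x • 1) = (calA2 k - x • 1)ᵀ * flipU k := by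
  rw [flipU_mul, mul_flipU]
  ext i j
  have hik := i.isLt
  have hjk := j.isLt
  have h1 : (((i.rev : Fin k) : ℕ) : ℤ) - ((j : ℕ) : ℤ)
      = (((j.rev : Fin k) : ℕ) : ℤ) - ((i : ℕ) : ℤ) := by
    rw [Fin.val_rev, Fin.val_rev]
    omega
  have h2 : (i.rev = j) ↔ (j.rev = i) := by
    rw [Fin.ext_iff, Fin.ext_iff, Fin.val_rev, Fin.val_rev]
    omega
  simp only [Matrix.submatrix_apply, Matrix.transpose_apply, id_eq, Matrix.sub_apply,
    Matrix.smul_apply, Matrix.one_apply, calA2, Matrix.of_apply, smul_eq_mul]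
  rw [h1]
  by_cases h : i.rev = j
  · rw [if_pos h, if_pos (h2.mp h)]
  · rw [if_neg h, if_neg (fun hh => h (h2.mpr hh))]

lemma flipU_transpose (k : ℕ) : (flipU k)ᵀ = flipU k := by
  ext i j
  simp only [Matrix.transpose_apply, flipU, Matrix.of_apply]
  rw [if_congr (by omega : ((j : ℕ) + (i : ℕ) + 1 = k) ↔ ((i : ℕ) + (j : ℕ) + 1 = k)) rfl rfl]

lemma flipU_mul_flipU (k : ℕ) : flipU k * flipU k = 1 := by
  rw [flipU_mul]
  ext i j
  simp only [Matrix.submatrix_apply, id_eq, flipU_apply_rev, Fin.rev_rev, Matrix.one_apply]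
  rw [if_congr (eq_comm) rfl rfl]

lemma U2_transpose (k : ℕ) : (U2 k)ᵀ = U2 k := by
  simp [U2, Matrix.fromBlocks_transpose, flipU_transpose]

lemma J2_transpose (k : ℕ) : (J2 k)ᵀ = J2 k := by
  simp [J2, Matrix.fromBlocks_transpose]

lemma U2_mul_U2 (k : ℕ) : U2 k * U2 k = 1 := by
  simp [U2, Matrix.fromBlocks_multiply, flipU_mul_flipU, ← Matrix.fromBlocks_one]

lemma J2_mul_J2 (k : ℕ) : J2 k * J2 k = 1 := by
  simp [J2, Matrix.fromBlocks_multiply, ← Matrix.fromBlocks_one]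

lemma J2_mul_U2 (k : ℕ) : J2 k * U2 k = fromBlocks 0 (flipU k) (-(flipU k)) 0 := by
  simp [J2, U2, Matrix.fromBlocks_multiply]

lemma U2_mul_J2 (k : ℕ) : U2 k * J2 k = -(J2 k * U2 k) := by
  rw [J2_mul_U2]
  simp [U2, J2, Matrix.fromBlocks_multiply, Matrix.fromBlocks_neg]

lemma JU_transpose (k : ℕ) : (J2 k * U2 k)ᵀ = -(J2 k * U2 k) := by
  rw [Matrix.transpose_mul, U2_transpose, J2_transpose, U2_mul_J2]

lemma JU_mul_JU (k : ℕ) : (J2 k * U2 k) * (J2 k * U2 k) = -1 := by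
  rw [Matrix.mul_assoc, ← Matrix.mul_assoc (U2 k), U2_mul_J2, Matrix.neg_mul, Matrix.mul_neg,
    Matrix.mul_assoc, U2_mul_U2, Matrix.mul_one, J2_mul_J2]

/-- The auxiliary skew matrix `D̂ = diag{J₂ₘU₂ₘ, −J₂ₙU₂ₙ}`. -/
def DhatM (m n : ℕ) :
    Matrix ((Fin m ⊕ Fin m) ⊕ (Fin n ⊕ Fin n)) ((Fin m ⊕ Fin m) ⊕ (Fin n ⊕ Fin n)) ℂ :=
  fromBlocks (J2 m * U2 m) 0 0 (-(J2 n * U2 n))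

lemma DhatM_transpose (m n : ℕ) : (DhatM m n)ᵀ = -(DhatM m n) := by
  rw [DhatM, Matrix.fromBlocks_transpose, Matrix.transpose_neg, JU_transpose, JU_transpose,
    Matrix.fromBlocks_neg]
  simp

lemma JU_comm_diag {k : ℕ} (x : ℂ) :
    (J2 k * U2 k) * fromBlocks (calA2 k - x • 1) 0 0 (calA2 k - x • 1)
      = (fromBlocks (calA2 k - x • 1) 0 0 (calA2 k - x • 1))ᵀ * (J2 k * U2 k) := by
  rw [J2_mul_U2, Matrix.fromBlocks_transpose, Matrix.fromBlocks_multiply,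
    Matrix.fromBlocks_multiply]
  simp [flip_comm_calA2]


lemma g21_transpose {m n : ℕ} (g12 : Matrix (Fin m ⊕ Fin m) (Fin n ⊕ Fin n) ℂ)
    (g21 : Matrix (Fin n ⊕ Fin n) (Fin m ⊕ Fin m) ℂ)
    (hg : g21 = -(U2 n * J2 n * g12ᵀ * J2 m * U2 m)) :
    g21ᵀ = -(U2 m * (J2 m * (g12 * (J2 n * U2 n)))) := by
  rw [hg]
  simp only [Matrix.transpose_neg, Matrix.transpose_mul, Matrix.transpose_transpose,
    U2_transpose, J2_transpose, Matrix.mul_assoc]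

lemma off12 {m n : ℕ} (g12 : Matrix (Fin m ⊕ Fin m) (Fin n ⊕ Fin n) ℂ)
    (g21 : Matrix (Fin n ⊕ Fin n) (Fin m ⊕ Fin m) ℂ)
    (hg : g21 = -(U2 n * J2 n * g12ᵀ * J2 m * U2 m)) :
    (J2 m * U2 m) * g12 = -(g21ᵀ * (J2 n * U2 n)) := by
  rw [g21_transpose g12 g21 hg, Matrix.neg_mul, neg_neg]
  rw [Matrix.mul_assoc (U2 m), Matrix.mul_assoc (J2 m) (g12 * (J2 n * U2 n)), Matrix.mul_assoc g12, JU_mul_JU,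
    Matrix.mul_neg, Matrix.mul_one, Matrix.mul_neg, Matrix.mul_neg,
    ← Matrix.mul_assoc (U2 m) (J2 m), U2_mul_J2, Matrix.neg_mul, neg_neg]

lemma off21 {m n : ℕ} (g12 : Matrix (Fin m ⊕ Fin m) (Fin n ⊕ Fin n) ℂ)
    (g21 : Matrix (Fin n ⊕ Fin n) (Fin m ⊕ Fin m) ℂ)
    (hg : g21 = -(U2 n * J2 n * g12ᵀ * J2 m * U2 m)) :
    -((J2 n * U2 n) * g21) = g12ᵀ * (J2 m * U2 m) := by
  rw [hg]
  simp only [Matrix.mul_assoc, Matrix.mul_neg, neg_neg]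
  rw [← Matrix.mul_assoc (U2 n) (U2 n), U2_mul_U2, Matrix.one_mul,
    ← Matrix.mul_assoc (J2 n) (J2 n), J2_mul_J2, Matrix.one_mul]

lemma Dhat_comm {m n : ℕ} (g12 : Matrix (Fin m ⊕ Fin m) (Fin n ⊕ Fin n) ℂ)
    (g21 : Matrix (Fin n ⊕ Fin n) (Fin m ⊕ Fin m) ℂ)
    (hg : g21 = -(U2 n * J2 n * g12ᵀ * J2 m * U2 m)) (x1 x2 : ℂ) :
    DhatM m n * GMat m n g12 g21 x1 x2 = (GMat m n g12 g21 x1 x2)ᵀ * DhatM m n := by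
  rw [GMat, DhatM, Matrix.fromBlocks_transpose, Matrix.fromBlocks_multiply,
    Matrix.fromBlocks_multiply]
  simp only [Matrix.zero_mul, Matrix.mul_zero, add_zero, zero_add, Matrix.neg_mul,
    Matrix.mul_neg]
  rw [Matrix.fromBlocks_inj]
  refine ⟨JU_comm_diag x2, ?_, ?_, ?_⟩
  · rw [off12 g12 g21 hg]
  · rw [← off21 g12 g21 hg]
  · rw [calA1_eq_calA2, JU_comm_diag x1]

lemma skew_dot {N : Type*} [Fintype N] (A Dh : Matrix N N ℂ)
    (hcomm : Dh * A = Aᵀ * Dh) (hskew : Dhᵀ = -Dh) (x e : N → ℂ) (hx : A *ᵥ x = e) :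
    x ⬝ᵥ (Dh *ᵥ e) = 0 := by
  have hQ : (Dh * A)ᵀ = -(Dh * A) := by
    rw [Matrix.transpose_mul, hskew, Matrix.mul_neg, ← hcomm]
  have h1 : x ⬝ᵥ (Dh *ᵥ e) = x ⬝ᵥ ((Dh * A) *ᵥ x) := by
    rw [← hx, Matrix.mulVec_mulVec]
  have h2 : x ⬝ᵥ ((Dh * A) *ᵥ x) = -(x ⬝ᵥ ((Dh * A) *ᵥ x)) := by
    conv_lhs => rw [Matrix.dotProduct_mulVec,
      show x ᵥ* (Dh * A) = ((Dh * A)ᵀ) *ᵥ x by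
        rw [← Matrix.vecMul_transpose, Matrix.transpose_transpose],
      hQ, Matrix.neg_mulVec, neg_dotProduct, dotProduct_comm]
  rw [h1]
  linear_combination (1 / 2 : ℂ) * h2

lemma P2M_eq (m n : ℕ) : P2M m n = fromBlocks 0 0 0 1 := by
  ext i j
  rcases i with (i | i) <;> rcases j with (j | j) <;>
    simp [P2M, P1M, Matrix.sub_apply, Matrix.one_apply]

lemma GMat_diff (m n : ℕ) (g12 : Matrix (Fin m ⊕ Fin m) (Fin n ⊕ Fin n) ℂ)
    (g21 : Matrix (Fin n ⊕ Fin n) (Fin m ⊕ Fin m) ℂ) (l1 l2 u1 u2 : ℂ) :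
    GMat m n g12 g21 u1 u2 - GMat m n g12 g21 l1 l2
      = (l2 - u2) • P1M m n + (l1 - u1) • P2M m n := by
  ext i j
  rcases i with (i | i) | (i | i) <;> rcases j with (j | j) | (j | j) <;>
    simp [GMat, P1M, P2M, Matrix.sub_apply, Matrix.add_apply, Matrix.smul_apply,
      Matrix.one_apply, smul_eq_mul] <;>
    split_ifs <;> ring

lemma DJU_mul_M (m n : ℕ) (l1 l2 u1 u2 : ℂ) :
    DJU m n * ((l2 - u2) • P1M m n - (l1 - u1) • P2M m n)
      = DhatM m n * ((l2 - u2) • P1M m n + (l1 - u1) • P2M m n) := by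
  have h1 : DJU m n * P1M m n = DhatM m n * P1M m n := by
    rw [DJU, DhatM, P1M, Matrix.fromBlocks_multiply, Matrix.fromBlocks_multiply]
    simp
  have h2 : DJU m n * P2M m n = -(DhatM m n * P2M m n) := by
    rw [DJU, DhatM, P2M_eq, Matrix.fromBlocks_multiply, Matrix.fromBlocks_multiply]
    simp [Matrix.fromBlocks_neg]
  rw [Matrix.mul_sub, Matrix.mul_add, Matrix.mul_smul, Matrix.mul_smul, Matrix.mul_smul,
    Matrix.mul_smul, h1, h2, smul_neg, sub_neg_eq_add]

end Lemma31Aux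

/-- Lemma 3.1: the two representations of `ω` built from an arbitrary `g_{12}`
agree. -/
theorem omega_well_defined (m n : ℕ) (hm : 0 < m) (hn : 0 < n)
    (g12 : Matrix (Fin m ⊕ Fin m) (Fin n ⊕ Fin n) ℂ)
    (g21 : Matrix (Fin n ⊕ Fin n) (Fin m ⊕ Fin m) ℂ)
    (hg : g21 = -(U2 n * J2 n * g12ᵀ * J2 m * U2 m))
    (θ : MvPolynomial (Fin 2) ℂ)
    (hθ1 : θ ^ 2 = (GPoly m n g12 g21).det)
    (hθ2 : MvPolynomial.coeff (Finsupp.single (0 : Fin 2) n + Finsupp.single (1 : Fin 2) m) θ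
      = -1)
    (l1 l2 u1 u2 : ℂ)
    (hl1 : l1 ≠ Complex.I / 2) (hl2 : l2 ≠ Complex.I / 2)
    (hu1 : u1 ≠ Complex.I / 2) (hu1' : u1 ≠ -(Complex.I / 2))
    (hu2 : u2 ≠ Complex.I / 2) (hu2' : u2 ≠ -(Complex.I / 2))
    (hGl : (GMat m n g12 g21 l1 l2).det ≠ 0) (hGu : (GMat m n g12 g21 u1 u2).det ≠ 0)
    (uh ux : ((Fin m ⊕ Fin m) ⊕ (Fin n ⊕ Fin n)) → ℂ)
    (huh : uh = (-Complex.I * ((l1 - Complex.I / 2) ^ n)⁻¹ * ((l2 - Complex.I / 2) ^ m)⁻¹ *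
        MvPolynomial.eval ![l1, l2] θ) • ((GMat m n g12 g21 l1 l2)⁻¹ *ᵥ eVec m n))
    (hux : ux = (((u1 - Complex.I / 2) / (u1 + Complex.I / 2)) ^ n *
        ((u2 - Complex.I / 2) / (u2 + Complex.I / 2)) ^ m) •
        (((-Complex.I * ((u1 - Complex.I / 2) ^ n)⁻¹ * ((u2 - Complex.I / 2) ^ m)⁻¹ *
            MvPolynomial.eval ![u1, u2] θ) • ((GMat m n g12 g21 u1 u2)⁻¹ *ᵥ eVec m n))
          ᵥ* DJU m n)) :
    ux ⬝ᵥ (((l2 - u2) • P1M m n - (l1 - u1) • P2M m n) *ᵥ uh) = 0 ∧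
    (l1 ≠ u1 → l2 ≠ u2 →
      Complex.I * (l1 - u1)⁻¹ * (ux ⬝ᵥ (P1M m n *ᵥ uh))
        = Complex.I * (l2 - u2)⁻¹ * (ux ⬝ᵥ (P2M m n *ᵥ uh))) := by
  have hGw : GMat m n g12 g21 u1 u2 *ᵥ ((GMat m n g12 g21 u1 u2)⁻¹ *ᵥ eVec m n) = eVec m n := by
    rw [Matrix.mulVec_mulVec, Matrix.mul_nonsing_inv _ (isUnit_iff_ne_zero.mpr hGu),
      Matrix.one_mulVec]
  have hGv : GMat m n g12 g21 l1 l2 *ᵥ ((GMat m n g12 g21 l1 l2)⁻¹ *ᵥ eVec m n) = eVec m n := by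
    rw [Matrix.mulVec_mulVec, Matrix.mul_nonsing_inv _ (isUnit_iff_ne_zero.mpr hGl),
      Matrix.one_mulVec]
  set w := (GMat m n g12 g21 u1 u2)⁻¹ *ᵥ eVec m n with hw
  set v := (GMat m n g12 g21 l1 l2)⁻¹ *ᵥ eVec m n with hv
  have hzw : w ⬝ᵥ (DhatM m n *ᵥ eVec m n) = 0 :=
    skew_dot _ _ (Dhat_comm g12 g21 hg u1 u2) (DhatM_transpose m n) _ _ hGw
  have hzv : v ⬝ᵥ (DhatM m n *ᵥ eVec m n) = 0 :=
    skew_dot _ _ (Dhat_comm g12 g21 hg l1 l2) (DhatM_transpose m n) _ _ hGv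
  have core : (w ᵥ* DJU m n) ⬝ᵥ (((l2 - u2) • P1M m n - (l1 - u1) • P2M m n) *ᵥ v) = 0 := by
    rw [← Matrix.dotProduct_mulVec, Matrix.mulVec_mulVec, DJU_mul_M,
      ← GMat_diff m n g12 g21 l1 l2 u1 u2, Matrix.mul_sub, Matrix.sub_mulVec,
      dotProduct_sub]
    rw [Dhat_comm g12 g21 hg u1 u2, ← Matrix.mulVec_mulVec, ← Matrix.mulVec_mulVec, hGv]
    rw [Matrix.dotProduct_mulVec w (GMat m n g12 g21 u1 u2)ᵀ, Matrix.vecMul_transpose, hGw,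
      hzw, sub_zero]
    rw [Matrix.dotProduct_mulVec,
      show eVec m n ᵥ* DhatM m n = (DhatM m n)ᵀ *ᵥ eVec m n by
        rw [← Matrix.vecMul_transpose, Matrix.transpose_transpose],
      DhatM_transpose, Matrix.neg_mulVec, neg_dotProduct, dotProduct_comm,
      hzv, neg_zero]
  have key : ux ⬝ᵥ (((l2 - u2) • P1M m n - (l1 - u1) • P2M m n) *ᵥ uh) = 0 := by
    rw [hux, huh]
    simp only [Matrix.smul_vecMul, Matrix.mulVec_smul, smul_dotProduct,
      dotProduct_smul, smul_eq_mul]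
    rw [core]
    ring
  refine ⟨key, ?_⟩
  intro hne1 hne2
  have h0 : (l2 - u2) * (ux ⬝ᵥ (P1M m n *ᵥ uh)) - (l1 - u1) * (ux ⬝ᵥ (P2M m n *ᵥ uh)) = 0 := by
    have h := key
    rw [Matrix.sub_mulVec, Matrix.smul_mulVec, Matrix.smul_mulVec,
      dotProduct_sub, dotProduct_smul, dotProduct_smul, smul_eq_mul,
      smul_eq_mul] at h
    exact h
  have d1 : l1 - u1 ≠ 0 := sub_ne_zero.mpr hne1
  have d2 : l2 - u2 ≠ 0 := sub_ne_zero.mpr hne2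
  field_simp
  linear_combination h0

end
end

section
/- (Uniqueness part of Lemma 3.2) Let R and R' be mn×mn complex matrices such that for all complex λ1, λ2 ≠ i/2 and μ1, μ2 ≠ −i/2: 𝟏^*(A_1^* − μ1 I)^{-1}(A_2^* − μ2 I)^{-1}·R·(A_2 − λ2 I)^{-1}(A_1 − λ1 I)^{-1}·𝟏 = 𝟏^*(A_1^* − μ1 I)^{-1}(A_2^* − μ2 I)^{-1}·R'·(A_2 − λ2 I)^{-1}(A_1 − λ1 I)^{-1}·𝟏. Then R = R'. -/
open Matrix

noncomputable section

open Kronecker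

def Cmat (k : ℕ) (l : ℂ) : Matrix (Fin k) (Fin k) ℂ :=
  Matrix.of (fun j i : Fin k => aC ((j : ℕ) - (i : ℕ))) - l • 1

lemma Cmat_det (k : ℕ) (l : ℂ) : (Cmat k l).det = (Complex.I / 2 - l) ^ k := by
  have ht : (Cmat k l).BlockTriangular OrderDual.toDual := by
    intro i j hij
    have hij' : (i : ℕ) < (j : ℕ) := hij
    have h2 : i ≠ j := by
      intro hh; subst hh; exact lt_irrefl _ hij'
    have ha : aC (((i : ℕ) : ℤ) - ((j : ℕ) : ℤ)) = 0 := by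
      simp only [aC]; rw [if_pos (by omega : ((i : ℕ) : ℤ) - ((j : ℕ) : ℤ) < 0)]
    simp [Cmat, ha, Matrix.one_apply, h2]
  rw [Matrix.det_of_lowerTriangular _ ht]
  have : ∀ i : Fin k, Cmat k l i i = Complex.I / 2 - l := by
    intro i; simp [Cmat, aC, Matrix.one_apply]
  rw [Finset.prod_congr rfl (fun i _ => this i)]
  simp [Finset.card_univ]

lemma Cmat_isUnit {k : ℕ} {l : ℂ} (h : l ≠ Complex.I / 2) : IsUnit (Cmat k l).det := by
  rw [Cmat_det]
  exact (pow_ne_zero _ (sub_ne_zero.mpr (Ne.symm h))).isUnit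

def cOf (s : ℂ) : ℂ := Complex.I / (1 - s)
def lamOf (s : ℂ) : ℂ := Complex.I / 2 - cOf s

lemma cOf_ne {s : ℂ} (hs : s ≠ 1) : cOf s ≠ 0 :=
  div_ne_zero Complex.I_ne_zero (sub_ne_zero.mpr (Ne.symm hs))

lemma lamOf_ne {s : ℂ} (hs : s ≠ 1) : lamOf s ≠ Complex.I / 2 := by
  simp only [lamOf]
  intro hh
  exact cOf_ne hs (by linear_combination (Complex.I/2 - cOf s) - hh)

lemma Cmat_mulVec (k : ℕ) {s : ℂ} (hs : s ≠ 1) :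
    Cmat k (lamOf s) *ᵥ (fun j : Fin k => s ^ (j : ℕ)) = fun _ => cOf s := by
  have hc : cOf s ≠ 0 := cOf_ne hs
  have hI : cOf s * (1 - s) = Complex.I :=
    div_mul_cancel₀ _ (sub_ne_zero.mpr (Ne.symm hs))
  funext j
  rw [Matrix.mulVec, dotProduct]
  set g : ℕ → ℂ := fun i =>
    (aC (((j : ℕ) : ℤ) - (i : ℤ)) - if (j : ℕ) = i then lamOf s else 0) * s ^ i with hg
  have hsummand : ∀ i : Fin k,
      Cmat k (lamOf s) j i * s ^ (i : ℕ)
        = g (i : ℕ) := by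
    intro i
    simp only [hg, Cmat, Matrix.sub_apply, Matrix.smul_apply, Matrix.one_apply, Matrix.of_apply,
      smul_eq_mul, Fin.ext_iff]
    by_cases hji : (j : ℕ) = (i : ℕ) <;> simp [hji]
  calc ∑ i : Fin k, Cmat k (lamOf s) j i * s ^ (i : ℕ)
      = ∑ i ∈ Finset.range k, g i := by
        rw [Finset.sum_congr rfl (fun i _ => hsummand i)]
        exact Fin.sum_univ_eq_sum_range g k
    _ = ∑ i ∈ Finset.range ((j : ℕ) + 1), g i := by
        refine (Finset.sum_subset (Finset.range_subset_range.mpr j.2) ?_).symm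
        intro i _ hi
        have : (j : ℕ) < i := by
          simp only [Finset.mem_range] at hi; omega
        have h2 : (j : ℕ) ≠ i := by omega
        have ha : aC (((j : ℕ) : ℤ) - (i : ℕ)) = 0 := by
          simp only [aC]; rw [if_pos (by omega : ((j : ℕ) : ℤ) - (i : ℕ) < 0)]
        simp [hg, ha, h2]
    _ = (∑ i ∈ Finset.range (j : ℕ), g i) + (aC 0 - lamOf s) * s ^ (j : ℕ) := by
        rw [Finset.sum_range_succ]; simp [hg]
    _ = Complex.I * (∑ i ∈ Finset.range (j : ℕ), s ^ i) + cOf s * s ^ (j : ℕ) := by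
        rw [Finset.mul_sum]
        congr 1
        · refine Finset.sum_congr rfl (fun i hi => ?_)
          have hi' : i < (j : ℕ) := Finset.mem_range.mp hi
          have h3 : (j : ℕ) ≠ i := by omega
          have ha : aC (((j : ℕ) : ℤ) - (i : ℕ)) = Complex.I := by
            simp only [aC]
            rw [if_neg (by omega : ¬ (((j : ℕ) : ℤ) - (i : ℕ) < 0)),
              if_neg (by omega : ¬ (((j : ℕ) : ℤ) - (i : ℕ) = 0))]
          simp [hg, ha, h3]
        · simp only [aC, lamOf]
          norm_num
    _ = cOf s := by
        have hgeo := geom_sum_mul s (j : ℕ)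
        linear_combination (∑ i ∈ Finset.range (j : ℕ), s ^ i) * hI.symm - cOf s * hgeo

lemma Cmat_inv_mulVec (k : ℕ) {s : ℂ} (hs : s ≠ 1) :
    (Cmat k (lamOf s))⁻¹ *ᵥ (onesV (Fin k))
      = (cOf s)⁻¹ • fun j : Fin k => s ^ (j : ℕ) := by
  have hu := Cmat_isUnit (k := k) (lamOf_ne hs)
  have h1 : (Cmat k (lamOf s))⁻¹ *ᵥ (Cmat k (lamOf s) *ᵥ (fun j : Fin k => s ^ (j : ℕ)))
      = fun j : Fin k => s ^ (j : ℕ) := by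
    rw [Matrix.mulVec_mulVec, Matrix.nonsing_inv_mul _ hu, Matrix.one_mulVec]
  rw [Cmat_mulVec k hs] at h1
  have h2 : (fun _ : Fin k => cOf s) = cOf s • (onesV (Fin k)) := by
    funext j; simp [onesV]
  rw [h2, Matrix.mulVec_smul] at h1
  have hc : cOf s ≠ 0 := cOf_ne hs
  calc (Cmat k (lamOf s))⁻¹ *ᵥ (onesV (Fin k))
      = (cOf s)⁻¹ • (cOf s • ((Cmat k (lamOf s))⁻¹ *ᵥ (onesV (Fin k)))) := by
        rw [smul_smul, inv_mul_cancel₀ hc, one_smul]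
    _ = (cOf s)⁻¹ • fun j : Fin k => s ^ (j : ℕ) := by rw [h1]

lemma A1_sub (m n : ℕ) (l : ℂ) :
    A1 m n - l • 1 = (Cmat n l) ⊗ₖ (1 : Matrix (Fin m) (Fin m) ℂ) := by
  ext r c
  simp only [A1, Cmat, Matrix.sub_apply, Matrix.smul_apply, Matrix.one_apply, Matrix.of_apply,
    Matrix.kroneckerMap_apply, smul_eq_mul, Prod.mk.injEq, Prod.ext_iff]
  by_cases h1 : r.1 = c.1 <;> by_cases h2 : r.2 = c.2 <;> simp [h1, h2] <;> ring

lemma A2_sub (m n : ℕ) (l : ℂ) :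
    A2 m n - l • 1 = (1 : Matrix (Fin n) (Fin n) ℂ) ⊗ₖ (Cmat m l) := by
  ext r c
  simp only [A2, Cmat, Matrix.sub_apply, Matrix.smul_apply, Matrix.one_apply, Matrix.of_apply,
    Matrix.kroneckerMap_apply, smul_eq_mul, Prod.mk.injEq, Prod.ext_iff]
  by_cases h1 : r.1 = c.1 <;> by_cases h2 : r.2 = c.2 <;> simp [h1, h2] <;> ring

lemma kron_mulVec {a b : ℕ} (X : Matrix (Fin a) (Fin a) ℂ) (Y : Matrix (Fin b) (Fin b) ℂ)
    (v : Fin a → ℂ) (w : Fin b → ℂ) :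
    (X ⊗ₖ Y) *ᵥ (fun r : Fin a × Fin b => v r.1 * w r.2)
      = fun r => (X *ᵥ v) r.1 * (Y *ᵥ w) r.2 := by
  funext r
  simp only [Matrix.mulVec, dotProduct, Matrix.kroneckerMap_apply, Fintype.sum_prod_type,
    Finset.sum_mul, Finset.mul_sum]
  rw [Finset.sum_comm]
  refine Finset.sum_congr rfl fun i _ => Finset.sum_congr rfl fun j _ => by ring

def pV (m n : ℕ) (y1 y2 : ℂ) : Fin n × Fin m → ℂ := fun r => y1 ^ (r.1 : ℕ) * y2 ^ (r.2 : ℕ)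

lemma onesV_prod (m n : ℕ) :
    onesV (Fin n × Fin m) = fun r : Fin n × Fin m => onesV (Fin n) r.1 * onesV (Fin m) r.2 := by
  funext r; simp [onesV]

lemma tensor_solution (m n : ℕ) {y1 y2 : ℂ} (h1 : y1 ≠ 1) (h2 : y2 ≠ 1) :
    (A2 m n - lamOf y2 • 1)⁻¹ *ᵥ ((A1 m n - lamOf y1 • 1)⁻¹ *ᵥ onesV (Fin n × Fin m))
      = ((cOf y1)⁻¹ * (cOf y2)⁻¹) • pV m n y1 y2 := by
  rw [A1_sub, A2_sub, Matrix.inv_kronecker, Matrix.inv_kronecker,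
    onesV_prod, kron_mulVec]
  rw [show ((1 : Matrix (Fin n) (Fin n) ℂ))⁻¹ = 1 from inv_eq_right_inv (by rw [mul_one]),
    show ((1 : Matrix (Fin m) (Fin m) ℂ))⁻¹ = 1 from inv_eq_right_inv (by rw [mul_one])]
  simp only [Matrix.one_mulVec, Cmat_inv_mulVec n h1]
  rw [kron_mulVec, Matrix.one_mulVec, Cmat_inv_mulVec m h2]
  funext r
  simp only [pV, Pi.smul_apply, smul_eq_mul]
  ring

lemma star_pV (m n : ℕ) (s1 s2 : ℂ) :
    star (pV m n ((starRingEnd ℂ) s1) ((starRingEnd ℂ) s2)) = pV m n s1 s2 := by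
  funext r
  simp [pV, Pi.star_apply, map_pow, _root_.map_mul, Complex.star_def, Complex.conj_conj]

lemma conj_ne_one {s : ℂ} (hs : s ≠ 1) : (starRingEnd ℂ) s ≠ 1 := by
  intro hh
  exact hs (by simpa using congrArg (starRingEnd ℂ) hh)

lemma omega_eval (m n : ℕ) (S : Matrix (Fin n × Fin m) (Fin n × Fin m) ℂ)
    {σ1 σ2 y1 y2 : ℂ} (hσ1 : σ1 ≠ 1) (hσ2 : σ2 ≠ 1) (hy1 : y1 ≠ 1) (hy2 : y2 ≠ 1) :
    star (onesV (Fin n × Fin m)) ⬝ᵥ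
      ((((A1 m n)ᴴ - (starRingEnd ℂ) (lamOf ((starRingEnd ℂ) σ1)) • 1)⁻¹ *
        ((A2 m n)ᴴ - (starRingEnd ℂ) (lamOf ((starRingEnd ℂ) σ2)) • 1)⁻¹ * S *
        (A2 m n - lamOf y2 • 1)⁻¹ * (A1 m n - lamOf y1 • 1)⁻¹) *ᵥ onesV (Fin n × Fin m))
    = ((starRingEnd ℂ) ((cOf ((starRingEnd ℂ) σ1))⁻¹ * (cOf ((starRingEnd ℂ) σ2))⁻¹) *
        ((cOf y1)⁻¹ * (cOf y2)⁻¹)) *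
      (pV m n σ1 σ2 ⬝ᵥ (S *ᵥ pV m n y1 y2)) := by
  have hM1 : (A1 m n)ᴴ - (starRingEnd ℂ) (lamOf ((starRingEnd ℂ) σ1)) • 1
      = (A1 m n - lamOf ((starRingEnd ℂ) σ1) • 1)ᴴ := by
    rw [Matrix.conjTranspose_sub, Matrix.conjTranspose_smul, Matrix.conjTranspose_one]
    rfl
  have hM2 : (A2 m n)ᴴ - (starRingEnd ℂ) (lamOf ((starRingEnd ℂ) σ2)) • 1
      = (A2 m n - lamOf ((starRingEnd ℂ) σ2) • 1)ᴴ := by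
    rw [Matrix.conjTranspose_sub, Matrix.conjTranspose_smul, Matrix.conjTranspose_one]
    rfl
  rw [hM1, hM2, ← Matrix.conjTranspose_nonsing_inv, ← Matrix.conjTranspose_nonsing_inv]
  simp only [← Matrix.mulVec_mulVec]
  rw [tensor_solution m n hy1 hy2, Matrix.mulVec_smul, Matrix.mulVec_smul, Matrix.mulVec_smul,
    dotProduct_smul, Matrix.dotProduct_mulVec, Matrix.dotProduct_mulVec]
  have hstar : star (onesV (Fin n × Fin m)) ᵥ* ((A1 m n - lamOf ((starRingEnd ℂ) σ1) • 1)⁻¹)ᴴ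
        ᵥ* ((A2 m n - lamOf ((starRingEnd ℂ) σ2) • 1)⁻¹)ᴴ
      = star ((A2 m n - lamOf ((starRingEnd ℂ) σ2) • 1)⁻¹ *ᵥ
          ((A1 m n - lamOf ((starRingEnd ℂ) σ1) • 1)⁻¹ *ᵥ onesV (Fin n × Fin m))) := by
    rw [Matrix.star_mulVec, Matrix.star_mulVec]
  rw [hstar, tensor_solution m n (conj_ne_one hσ1) (conj_ne_one hσ2), star_smul, star_pV,
    smul_dotProduct]
  simp only [smul_eq_mul, Complex.star_def]
  ring

lemma fin_cast_ne_one (a : ℕ) : ((a : ℂ) + 2) ≠ 1 := by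
  intro hh
  have : (a : ℂ) + 1 = 0 := by linear_combination hh
  exact Nat.cast_add_one_ne_zero a this

def Pmat (m n : ℕ) : Matrix (Fin n × Fin m) (Fin n × Fin m) ℂ :=
  (Matrix.vandermonde fun i : Fin n => ((i : ℕ) : ℂ) + 2)
    ⊗ₖ (Matrix.vandermonde fun i : Fin m => ((i : ℕ) : ℂ) + 2)

lemma Pmat_det_isUnit (m n : ℕ) : IsUnit (Pmat m n).det := by
  rw [Pmat, Matrix.det_kronecker]
  have hinj : ∀ k : ℕ, Function.Injective (fun i : Fin k => ((i : ℕ) : ℂ) + 2) := by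
    intro k i j hij
    have : ((i : ℕ) : ℂ) = ((j : ℕ) : ℂ) := by linear_combination hij
    exact Fin.ext (Nat.cast_injective this)
  have h1 := (Matrix.det_vandermonde_ne_zero_iff).mpr (hinj n)
  have h2 := (Matrix.det_vandermonde_ne_zero_iff).mpr (hinj m)
  exact (mul_ne_zero (pow_ne_zero _ h1) (pow_ne_zero _ h2)).isUnit

lemma Pmat_apply (m n : ℕ) (a r : Fin n × Fin m) :
    Pmat m n a r = pV m n (((a.1 : ℕ) : ℂ) + 2) (((a.2 : ℕ) : ℂ) + 2) r := by
  simp [Pmat, pV, Matrix.vandermonde]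

lemma triple_entry (m n : ℕ) (S : Matrix (Fin n × Fin m) (Fin n × Fin m) ℂ)
    (a b : Fin n × Fin m) :
    (Pmat m n * S * (Pmat m n)ᵀ) a b
      = pV m n (((a.1 : ℕ) : ℂ) + 2) (((a.2 : ℕ) : ℂ) + 2) ⬝ᵥ
        (S *ᵥ pV m n (((b.1 : ℕ) : ℂ) + 2) (((b.2 : ℕ) : ℂ) + 2)) := by
  simp only [Matrix.mul_apply, Matrix.transpose_apply, dotProduct, Matrix.mulVec,
    Finset.sum_mul, Finset.mul_sum, Pmat_apply]
  rw [Finset.sum_comm]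
  refine Finset.sum_congr rfl fun r _ => Finset.sum_congr rfl fun c _ => by ring


/-- uniqueness part of Lemma 3.2: `ω` determines `R` uniquely. -/
theorem R_unique_from_omega (m n : ℕ) (hm : 0 < m) (hn : 0 < n)
    (R R' : Matrix (Fin n × Fin m) (Fin n × Fin m) ℂ)
    (h : ∀ l1 l2 u1 u2 : ℂ, l1 ≠ Complex.I / 2 → l2 ≠ Complex.I / 2 →
      u1 ≠ -(Complex.I / 2) → u2 ≠ -(Complex.I / 2) →
      star (onesV (Fin n × Fin m)) ⬝ᵥ
          ((((A1 m n)ᴴ - u1 • 1)⁻¹ * ((A2 m n)ᴴ - u2 • 1)⁻¹ * R *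
            (A2 m n - l2 • 1)⁻¹ * (A1 m n - l1 • 1)⁻¹) *ᵥ onesV (Fin n × Fin m))
        = star (onesV (Fin n × Fin m)) ⬝ᵥ
          ((((A1 m n)ᴴ - u1 • 1)⁻¹ * ((A2 m n)ᴴ - u2 • 1)⁻¹ * R' *
            (A2 m n - l2 • 1)⁻¹ * (A1 m n - l1 • 1)⁻¹) *ᵥ onesV (Fin n × Fin m))) :
    R = R' := by
  -- the key scalar identity
  have key : ∀ σ1 σ2 y1 y2 : ℂ, σ1 ≠ 1 → σ2 ≠ 1 → y1 ≠ 1 → y2 ≠ 1 →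
      pV m n σ1 σ2 ⬝ᵥ (R *ᵥ pV m n y1 y2) = pV m n σ1 σ2 ⬝ᵥ (R' *ᵥ pV m n y1 y2) := by
    intro σ1 σ2 y1 y2 hσ1 hσ2 hy1 hy2
    have hu : ∀ s : ℂ, s ≠ 1 →
        (starRingEnd ℂ) (lamOf ((starRingEnd ℂ) s)) ≠ -(Complex.I / 2) := by
      intro s hs hh
      apply lamOf_ne (conj_ne_one hs)
      have := congrArg (starRingEnd ℂ) hh
      simpa [map_neg, map_div₀, Complex.conj_I, map_ofNat, neg_div, neg_neg] using this
    have hh := h (lamOf y1) (lamOf y2)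
      ((starRingEnd ℂ) (lamOf ((starRingEnd ℂ) σ1)))
      ((starRingEnd ℂ) (lamOf ((starRingEnd ℂ) σ2)))
      (lamOf_ne hy1) (lamOf_ne hy2) (hu σ1 hσ1) (hu σ2 hσ2)
    rw [omega_eval m n R hσ1 hσ2 hy1 hy2, omega_eval m n R' hσ1 hσ2 hy1 hy2] at hh
    have hK : ((starRingEnd ℂ) ((cOf ((starRingEnd ℂ) σ1))⁻¹ * (cOf ((starRingEnd ℂ) σ2))⁻¹) *
        ((cOf y1)⁻¹ * (cOf y2)⁻¹)) ≠ 0 := by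
      apply mul_ne_zero
      · simp only [ne_eq, map_eq_zero]
        exact mul_ne_zero (inv_ne_zero (cOf_ne (conj_ne_one hσ1)))
          (inv_ne_zero (cOf_ne (conj_ne_one hσ2)))
      · exact mul_ne_zero (inv_ne_zero (cOf_ne hy1)) (inv_ne_zero (cOf_ne hy2))
    exact mul_left_cancel₀ hK hh
  have hdet := Pmat_det_isUnit m n
  have hdetT : IsUnit (Pmat m n)ᵀ.det := by rwa [Matrix.det_transpose]
  have hmat : Pmat m n * R * (Pmat m n)ᵀ = Pmat m n * R' * (Pmat m n)ᵀ := by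
    ext a b
    rw [triple_entry, triple_entry]
    exact key _ _ _ _ (fin_cast_ne_one _) (fin_cast_ne_one _) (fin_cast_ne_one _)
      (fin_cast_ne_one _)
  have hRP : R * (Pmat m n)ᵀ = R' * (Pmat m n)ᵀ := by
    have h2 : Pmat m n * (R * (Pmat m n)ᵀ) = Pmat m n * (R' * (Pmat m n)ᵀ) := by
      rw [← Matrix.mul_assoc, ← Matrix.mul_assoc, hmat]
    calc R * (Pmat m n)ᵀ = (Pmat m n)⁻¹ * (Pmat m n * (R * (Pmat m n)ᵀ)) :=
          (Matrix.nonsing_inv_mul_cancel_left _ _ hdet).symm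
      _ = (Pmat m n)⁻¹ * (Pmat m n * (R' * (Pmat m n)ᵀ)) := by rw [h2]
      _ = R' * (Pmat m n)ᵀ := Matrix.nonsing_inv_mul_cancel_left _ _ hdet
  calc R = R * (Pmat m n)ᵀ * ((Pmat m n)ᵀ)⁻¹ :=
        (Matrix.mul_nonsing_inv_cancel_right _ _ hdetT).symm
    _ = R' * (Pmat m n)ᵀ * ((Pmat m n)ᵀ)⁻¹ := by rw [hRP]
    _ = R' := Matrix.mul_nonsing_inv_cancel_right _ _ hdetT


end
end

section
/- (Final step of Theorem 3.3, p = 1) Let T be any mn×mn complex matrix and suppose there exist an mn×m matrix M and an m×mn matrix N such that A_1 T − T A_1^* = i·(M·M_{21} + M_{31}·N), where M_{21} = [I_m I_m … I_m] and M_{31} = M_{21}^*. Then T is block Toeplitz: writing T = {T_{pq}}_{p,q=1}^n with m×m blocks, T_{pq} = T_{p'q'} whenever p − q = p' − q'. -/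
open Matrix

noncomputable section

lemma aC_conj' (r : ℤ) : (starRingEnd ℂ) (aC r) = - aC r := by
  unfold aC; split_ifs <;> simp [div_eq_mul_inv, Complex.ext_iff]

lemma sum_aC' {n : ℕ} (p : Fin n) (y : Fin n → ℂ) :
    ∑ s : Fin n, aC (((p:ℕ):ℤ) - ((s:ℕ):ℤ)) * y s
      = Complex.I * ((1/2) * y p + ∑ s ∈ Finset.univ.filter (· < p), y s) := by
  have key : ∀ s : Fin n, aC (((p:ℕ):ℤ) - ((s:ℕ):ℤ)) * y s
      = (if s < p then Complex.I * y s else 0) + (if s = p then (Complex.I/2) * y s else 0) := by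
    intro s
    rcases lt_trichotomy s p with hc | hc | hc
    · have h1 : (0:ℤ) < ((p:ℕ):ℤ) - ((s:ℕ):ℤ) := by
        have := (Fin.lt_iff_val_lt_val).mp hc; omega
      simp [aC, hc, hc.ne, h1.not_gt, h1.ne', mul_comm]
    · subst hc; simp [aC, lt_irrefl]
    · have h1 : ((p:ℕ):ℤ) - ((s:ℕ):ℤ) < 0 := by
        have := (Fin.lt_iff_val_lt_val).mp hc; omega
      simp [aC, h1, hc.not_gt, hc.ne']
  rw [Finset.sum_congr rfl (fun s _ => key s), Finset.sum_add_distrib,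
    Finset.sum_ite_eq' Finset.univ p (fun s => (Complex.I/2) * y s)]
  simp only [Finset.mem_univ, if_true, ← Finset.sum_filter]
  rw [mul_add, Finset.mul_sum]
  ring

lemma filter_lt_succ' {n : ℕ} (P P' : Fin n) (hP : (P':ℕ) + 1 = (P:ℕ)) :
    Finset.univ.filter (· < P) = insert P' (Finset.univ.filter (· < P')) := by
  ext s
  simp only [Finset.mem_filter, Finset.mem_insert, Finset.mem_univ, true_and,
    Fin.lt_iff_val_lt_val, Fin.ext_iff]
  omega

/-- final step of Theorem 3.3, p = 1: the identity with `M_{21}`, `M_{31}`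
forces `T` to be block Toeplitz. -/
theorem block_toeplitz_from_identity (m n : ℕ) (hm : 0 < m) (hn : 0 < n)
    (T : Matrix (Fin n × Fin m) (Fin n × Fin m) ℂ)
    (M : Matrix (Fin n × Fin m) (Fin m) ℂ) (N : Matrix (Fin m) (Fin n × Fin m) ℂ)
    (h : A1 m n * T - T * (A1 m n)ᴴ = Complex.I • (M * M21 m n + M31 m n * N)) :
    ∀ p q p' q' : Fin n,
      ((p : ℕ) : ℤ) - ((q : ℕ) : ℤ) = ((p' : ℕ) : ℤ) - ((q' : ℕ) : ℤ) →
      ∀ j l : Fin m, T (p, j) (q, l) = T (p', j) (q', l) := by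
  intro p q p' q' hpq j l
  have hE : ∀ P Q : Fin n,
      T (P,j) (Q,l) + (∑ s ∈ Finset.univ.filter (· < P), T (s,j) (Q,l))
        + (∑ s ∈ Finset.univ.filter (· < Q), T (P,j) (s,l))
        = M (P,j) l + N j (Q,l) := by
    intro P Q
    have h0 : (A1 m n * T - T * (A1 m n)ᴴ) (P,j) (Q,l)
        = (Complex.I • (M * M21 m n + M31 m n * N)) (P,j) (Q,l) := by rw [h]
    simp only [Matrix.sub_apply, Matrix.mul_apply, Matrix.smul_apply, Matrix.add_apply,
      Matrix.conjTranspose_apply, A1, M21, M31, Matrix.of_apply, Fintype.sum_prod_type,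
      mul_ite, ite_mul, mul_zero, zero_mul, apply_ite (starRingEnd ℂ), map_zero, _root_.map_one,
      smul_eq_mul] at h0
    have hst : ∀ r : ℤ, star (aC r) = - aC r := fun r => aC_conj' r
    simp only [apply_ite (star : ℂ → ℂ), star_zero, hst, mul_ite, ite_mul, mul_zero, zero_mul,
      mul_neg, star_one, Finset.sum_ite_eq, Finset.sum_ite_eq', Finset.mem_univ, if_true,
      mul_one, one_mul, Finset.sum_neg_distrib, sub_neg_eq_add] at h0
    have hcomm : (∑ x : Fin n, T (P, j) (x, l) * aC (((Q:ℕ):ℤ) - ((x:ℕ):ℤ)))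
        = ∑ x : Fin n, aC (((Q:ℕ):ℤ) - ((x:ℕ):ℤ)) * T (P, j) (x, l) :=
      Finset.sum_congr rfl fun s _ => mul_comm _ _
    rw [hcomm, sum_aC' P (fun s => T (s,j) (Q,l)),
      show (∑ x : Fin n, aC (((Q:ℕ):ℤ) - ((x:ℕ):ℤ)) * T (P, j) (x, l)) = _ from
        sum_aC' Q (fun s => T (P,j) (s,l))] at h0
    refine mul_left_cancel₀ Complex.I_ne_zero ?_
    linear_combination h0
  have hstep : ∀ P Q P' Q' : Fin n, (P':ℕ) + 1 = (P:ℕ) → (Q':ℕ) + 1 = (Q:ℕ) →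
      T (P,j) (Q,l) = T (P',j) (Q',l) := by
    intro P Q P' Q' hP hQ
    have e1 := hE P Q
    have e2 := hE P' Q
    have e3 := hE P Q'
    have e4 := hE P' Q'
    have fP := filter_lt_succ' P P' hP
    have fQ := filter_lt_succ' Q Q' hQ
    have hmemP : P' ∉ Finset.univ.filter (· < P') := by simp
    have hmemQ : Q' ∉ Finset.univ.filter (· < Q') := by simp
    rw [fP, fQ, Finset.sum_insert hmemP, Finset.sum_insert hmemQ] at e1
    rw [fQ, Finset.sum_insert hmemQ] at e2
    rw [fP, Finset.sum_insert hmemP] at e3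
    linear_combination e1 - e2 - e3 + e4
  have hshift : ∀ (k a b : ℕ) (ha : a + k < n) (hb : b + k < n) (ha0 : a < n) (hb0 : b < n),
      T (⟨a + k, ha⟩, j) (⟨b + k, hb⟩, l) = T (⟨a, ha0⟩, j) (⟨b, hb0⟩, l) := by
    intro k
    induction k with
    | zero => intro a b ha hb ha0 hb0; rfl
    | succ k ih =>
      intro a b ha hb ha0 hb0
      have h1 : a + k < n := by omega
      have h2 : b + k < n := by omega
      have := hstep ⟨a + (k+1), ha⟩ ⟨b + (k+1), hb⟩ ⟨a + k, h1⟩ ⟨b + k, h2⟩ rfl rfl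
      rw [this, ih a b h1 h2 ha0 hb0]
  rcases le_or_gt (p:ℕ) (p':ℕ) with hc | hc
  · obtain ⟨k, hk⟩ : ∃ k, (p':ℕ) = (p:ℕ) + k := ⟨(p':ℕ) - (p:ℕ), by omega⟩
    have hq' : (q':ℕ) = (q:ℕ) + k := by omega
    have hp'eq : p' = ⟨(p:ℕ) + k, hk ▸ p'.isLt⟩ := Fin.ext hk
    have hq'eq : q' = ⟨(q:ℕ) + k, hq' ▸ q'.isLt⟩ := Fin.ext hq'
    rw [hp'eq, hq'eq, hshift k (p:ℕ) (q:ℕ) _ _ p.isLt q.isLt]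
  · obtain ⟨k, hk⟩ : ∃ k, (p:ℕ) = (p':ℕ) + k := ⟨(p:ℕ) - (p':ℕ), by omega⟩
    have hq : (q:ℕ) = (q':ℕ) + k := by omega
    have hpeq : p = ⟨(p':ℕ) + k, hk ▸ p.isLt⟩ := Fin.ext hk
    have hqeq : q = ⟨(q':ℕ) + k, hq ▸ q.isLt⟩ := Fin.ext hq
    rw [hpeq, hqeq, hshift k (p':ℕ) (q':ℕ) _ _ p'.isLt q'.isLt]


end
end
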